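/- arXiv:math/0302233 — 9 statements merged into one kernel-verified Lean document; each statement's English description precedes it below -/
import Mathlib

section
/- Let X be a noetherian separated scheme and A = Γ(X, O_X) its ring of global sections. Then every prime ideal of A of height at most 1 lies in the image of the canonical morphism X → Spec A. In particular the canonical morphism hits all primes of height 0 and all primes of height 1. -/
open CategoryTheory

universe u v

-- Step 1 helper, standalone
theorem step1 {A : Type u} [CommRing A] {R : Type u} [CommRing R] (ρ : A →+* R)
    (p : Ideal A) [p.IsPrime]
    (hnp : ∀ Q : Ideal R, Q.IsPrime → Q.comap ρ ≠ p) :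
    ∃ s ∈ p.primeCompl, ρ s ∈ p.map ρ := by
  classical
  set T := p.primeCompl.map ρ with hT
  set L := Localization T with hL
  set ψ := algebraMap R L with hψ
  by_cases htop : (p.map ρ).map ψ = ⊤
  · have h1 : (1 : L) ∈ (p.map ρ).map ψ := htop ▸ Submodule.mem_top
    rw [IsLocalization.mem_map_algebraMap_iff T] at h1
    obtain ⟨⟨x, t⟩, hx⟩ := h1
    rw [one_mul] at hx
    obtain ⟨c, hc⟩ := (IsLocalization.eq_iff_exists T L).mp hx
    obtain ⟨s, hs, hst⟩ := Submonoid.mem_map.mp (mul_mem c.2 t.2)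
    refine ⟨s, hs, ?_⟩
    rw [hst, hc]
    exact Ideal.mul_mem_left _ _ x.2
  · obtain ⟨M, hMmax, hMle⟩ := Ideal.exists_le_maximal _ htop
    haveI := hMmax.isPrime
    set Q := M.comap ψ with hQ
    haveI : Q.IsPrime := Ideal.IsPrime.comap ψ
    exfalso
    apply hnp Q inferInstance
    apply le_antisymm
    · intro a ha
      by_contra hap
      have hU : IsUnit (ψ (ρ a)) :=
        IsLocalization.map_units (M := T) L ⟨ρ a, Submonoid.mem_map_of_mem ρ hap⟩
      exact hMmax.ne_top (Ideal.eq_top_of_isUnit_mem _ ha hU)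
    · intro a ha
      exact hMle (Ideal.mem_map_of_mem ψ (Ideal.mem_map_of_mem ρ ha))

theorem abstract_core
    {A : Type u} [CommRing A]
    {ι : Type v} [Fintype ι]
    {R : ι → Type u} [∀ i, CommRing (R i)] [∀ i, IsNoetherianRing (R i)]
    (ρ : ∀ i, A →+* R i)
    {W : ι → ι → Type u} [∀ i j, CommRing (W i j)]
    (τ : ∀ i j, R i →+* W i j) (τ' : ∀ i j, R j →+* W i j)
    (hcomm : ∀ i j, (τ i j).comp (ρ i) = (τ' i j).comp (ρ j))
    (p : Ideal A) [hp : p.IsPrime]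
    (hht : ∀ v w : Ideal A, v.IsPrime → w.IsPrime → v < w → w < p → False)
    (hinj : ∀ a : A, (∀ i, ρ i a = 0) → a = 0)
    (hglue : ∀ b : (∀ i, R i), (∀ i j, τ i j (b i) = τ' i j (b j)) → ∃ a, ∀ i, ρ i a = b i)
    (hnp : ∀ (i) (Q : Ideal (R i)), Q.IsPrime → Q.comap (ρ i) ≠ p) : False := by
  classical
  -- Step 1/2: choose s i and finite F i ⊆ p with ρ i (s i) ∈ span (ρ i '' F i)
  have key1 : ∀ i, ∃ s ∈ p.primeCompl, ρ i s ∈ p.map (ρ i) := fun i => step1 (ρ i) p (hnp i)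
  choose s hsS hsMem using key1
  have key2 : ∀ i, ∃ Fi : Finset A, ↑Fi ⊆ (p : Set A) ∧ ρ i (s i) ∈ Ideal.span ((ρ i) '' Fi) := by
    intro i
    have h := hsMem i
    rw [Ideal.map] at h
    obtain ⟨T, hT1, hT2⟩ := Submodule.mem_span_finite_of_mem_span h
    obtain ⟨Fi, hFi, rfl⟩ := Finset.subset_set_image_iff.mp hT1
    refine ⟨Fi, hFi, ?_⟩
    rwa [Finset.coe_image] at hT2
  choose F hFp hFs using key2
  set G : Finset A := Finset.univ.biUnion F with hG
  set J : Ideal A := Ideal.span (G : Set A) with hJ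
  have hJle : J ≤ p := by
    rw [hJ, Ideal.span_le]
    intro x hx
    obtain ⟨i, _, hxi⟩ := Finset.mem_biUnion.mp hx
    exact hFp i hxi
  have hJfg : J.FG := ⟨G, rfl⟩
  have hJi : ∀ i, ρ i (s i) ∈ J.map (ρ i) := by
    intro i
    refine Ideal.span_le.mpr ?_ (hFs i)
    rintro x ⟨a, ha, rfl⟩
    exact Ideal.mem_map_of_mem _ (Ideal.subset_span (Finset.mem_coe.mpr
      (Finset.mem_biUnion.mpr ⟨i, Finset.mem_univ i, ha⟩)))
  -- Step 3: the set of bad primes is finite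
  set Bad : Set (Ideal A) := {w | w.IsPrime ∧ w < p ∧ ¬ J ≤ w} with hBad
  have hBadsub : Bad ⊆ ⋃ i, (Ideal.comap (ρ i)) '' (minimalPrimes (R i)) := by
    rintro w ⟨hwpr, hwlt, -⟩
    have hker : ∃ i, RingHom.ker (ρ i) ≤ w := by
      by_contra hk
      push_neg at hk
      have hb : ∀ i, ∃ b, b ∈ RingHom.ker (ρ i) ∧ b ∉ w := by
        intro i
        obtain ⟨b, hb1, hb2⟩ := Set.not_subset.mp (hk i)
        exact ⟨b, hb1, hb2⟩
      choose b hbk hbw using hb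
      have hz : (∏ i, b i) = 0 := by
        apply hinj
        intro i
        rw [map_prod]
        exact Finset.prod_eq_zero (Finset.mem_univ i) (hbk i)
      haveI := hwpr
      have hmem : (∏ i, b i) ∈ w.primeCompl := Submonoid.prod_mem _ (fun i _ => hbw i)
      exact hmem (hz ▸ w.zero_mem)
    obtain ⟨i, hker⟩ := hker
    have hmin : w ∈ ((⊥ : Ideal (R i)).comap (ρ i)).minimalPrimes := by
      constructor
      · exact ⟨hwpr, by rwa [← RingHom.ker_eq_comap_bot]⟩
      · rintro v ⟨hvpr, -⟩ hvw
        by_contra hwv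
        exact hht v w hvpr hwpr (lt_of_le_of_ne hvw (fun h => hwv (h ▸ le_refl _))) hwlt
    obtain ⟨Q, hQmin, hQcomap⟩ := Ideal.exists_minimalPrimes_comap_eq (ρ i) w hmin
    exact Set.mem_iUnion.mpr ⟨i, ⟨Q, hQmin, hQcomap⟩⟩
  have hBadfin : Bad.Finite :=
    Set.Finite.subset (Set.finite_iUnion fun i =>
      ((minimalPrimes.finite_of_isNoetherianRing (R i)).image _)) hBadsub
  -- Step 4: prime avoidance
  obtain ⟨f, hfJ, hfBad⟩ : ∃ f ∈ J, ∀ w ∈ Bad, f ∉ w := by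
    by_contra h
    push_neg at h
    have hsub : (J : Set A) ⊆ ⋃ w ∈ ((hBadfin.toFinset : Finset (Ideal A)) : Set (Ideal A)), ((id w : Ideal A) : Set A) := by
      intro x hx
      obtain ⟨wd, hwd, hxw⟩ := h x hx
      exact Set.mem_biUnion (show wd ∈ ((hBadfin.toFinset : Finset (Ideal A)) : Set (Ideal A)) by
        simpa using hBadfin.mem_toFinset.mpr hwd) hxw
    rw [Ideal.subset_union_prime (f := id) ⊤ ⊤ (fun i hi _ _ => (hBadfin.mem_toFinset.mp hi).1)] at hsub
    obtain ⟨w, hw, hJw⟩ := hsub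
    exact (hBadfin.mem_toFinset.mp hw).2.2 hJw
  have hfp : f ∈ p := hJle hfJ
  -- Step 5: powers in the localization at p
  set Ap := Localization.AtPrime p with hAp
  set φ := algebraMap A Ap with hφ
  have hrad : J.map φ ≤ (Ideal.span {φ f}).radical := by
    rw [Ideal.radical_eq_sInf]
    refine le_sInf ?_
    rintro Wd hWd
    obtain ⟨hle, hWpr⟩ := hWd
    haveI := hWpr
    set w := Wd.comap φ with hw
    haveI hwpr : w.IsPrime := Ideal.IsPrime.comap φ
    have hwle : w ≤ p := by
      intro a ha
      by_contra hap
      have hU : IsUnit (φ a) := IsLocalization.map_units (M := p.primeCompl) Ap ⟨a, hap⟩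
      exact hWpr.ne_top (Ideal.eq_top_of_isUnit_mem _ ha hU)
    have hfw : f ∈ w := hle (Ideal.subset_span rfl)
    have hJw : J ≤ w := by
      rcases eq_or_lt_of_le hwle with heq | hlt
      · exact heq ▸ hJle
      · by_contra hnle
        exact hfBad w ⟨hwpr, hlt, hnle⟩ hfw
    exact Ideal.map_le_iff_le_comap.mpr hJw
  obtain ⟨M, hM⟩ := Ideal.exists_pow_le_of_le_radical_of_fg hrad (hJfg.map φ)
  -- Step 6: f becomes invertible in each localized section ring
  have key6 : ∀ i, ∃ u : Localization (p.primeCompl.map (ρ i)),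
      u * algebraMap (R i) _ ((ρ i) f) = 1 := by
    intro i
    set T := p.primeCompl.map (ρ i) with hT
    set L := Localization T with hLd
    set ψ := algebraMap (R i) L with hψ
    have hu : ∀ y : p.primeCompl, IsUnit ((ψ.comp (ρ i)) y) := fun y =>
      IsLocalization.map_units (M := T) L ⟨ρ i y, Submonoid.mem_map_of_mem (ρ i) y.2⟩
    set μ := IsLocalization.lift (S := Ap) hu with hμ
    have hμφ : μ.comp φ = ψ.comp (ρ i) := IsLocalization.lift_comp hu
    have h1 : (J.map φ).map μ = ⊤ := by
      refine Ideal.eq_top_of_isUnit_mem _ (show ψ ((ρ i) (s i)) ∈ (J.map φ).map μ from ?_) ?_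
      · rw [Ideal.map_map, hμφ, ← Ideal.map_map]
        exact Ideal.mem_map_of_mem ψ (hJi i)
      · exact hu ⟨s i, hsS i⟩
    have h2 : (⊤ : Ideal L) ≤ Ideal.span {ψ ((ρ i) f)} := by
      have e1 : ((J.map φ) ^ M).map μ ≤ (Ideal.span {φ f}).map μ := Ideal.map_mono hM
      rw [Ideal.map_pow, h1, Ideal.top_pow, Ideal.map_span, Set.image_singleton] at e1
      have e2 : μ (φ f) = ψ ((ρ i) f) := by
        have := RingHom.congr_fun hμφ f
        simpa using this
      rw [e2] at e1
      simpa using e1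
    exact isUnit_iff_exists_inv'.mp (Ideal.span_singleton_eq_top.mp (top_le_iff.mp h2))
  choose u hu using key6
  -- Step 7: clear denominators
  have key7 : ∀ i, ∃ (r : R i) (σi : A), σi ∈ p.primeCompl ∧
      u i * algebraMap (R i) _ ((ρ i) σi) = algebraMap (R i) _ r := by
    intro i
    obtain ⟨⟨r, t⟩, hx⟩ := IsLocalization.surj (p.primeCompl.map (ρ i)) (u i)
    obtain ⟨σi, hσi, hσieq⟩ := Submonoid.mem_map.mp t.2
    exact ⟨r, σi, hσi, by rw [hσieq]; exact hx⟩
  choose r σp hσp hrσ using key7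
  set σ : A := ∏ i, σp i with hσ
  have hσS : σ ∈ p.primeCompl := Submonoid.prod_mem _ (fun i _ => hσp i)
  set b : ∀ i, R i := fun i => r i * (ρ i) (∏ j ∈ Finset.univ.erase i, σp j) with hb
  have hbu : ∀ i, algebraMap (R i) (Localization (p.primeCompl.map (ρ i))) (b i)
      = u i * algebraMap (R i) _ ((ρ i) σ) := by
    intro i
    simp only [hb, hσ]
    rw [← Finset.mul_prod_erase Finset.univ σp (Finset.mem_univ i)]
    simp only [map_mul]
    rw [← hrσ i]
    ring
  have hbf : ∀ i, ∃ θi ∈ p.primeCompl,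
      (ρ i) θi * (b i * (ρ i) f - (ρ i) σ) = 0 := by
    intro i
    have hz : algebraMap (R i) (Localization (p.primeCompl.map (ρ i)))
        (b i * (ρ i) f - (ρ i) σ) = 0 := by
      rw [map_sub, map_mul, hbu i]
      calc u i * algebraMap (R i) _ ((ρ i) σ) * algebraMap (R i) _ ((ρ i) f)
            - algebraMap (R i) _ ((ρ i) σ)
          = (u i * algebraMap (R i) _ ((ρ i) f) - 1) * algebraMap (R i) _ ((ρ i) σ) := by ring
        _ = 0 := by rw [hu i]; ring
    rw [IsLocalization.map_eq_zero_iff (p.primeCompl.map (ρ i))] at hz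
    obtain ⟨m, hm⟩ := hz
    obtain ⟨θi, hθi, hθieq⟩ := Submonoid.mem_map.mp m.2
    exact ⟨θi, hθi, by rw [hθieq]; exact hm⟩
  choose θ1 hθ1S hθ1 using hbf
  -- overlap compatibility multipliers
  have hover : ∀ i j, ∃ θij ∈ p.primeCompl,
      ((τ i j).comp (ρ i)) θij * ((τ i j) (b i) - (τ' i j) (b j)) = 0 := by
    intro i j
    set TW := p.primeCompl.map ((τ i j).comp (ρ i)) with hTW
    set LW := Localization TW with hLW
    set ψW := algebraMap (W i j) LW with hψW
    have hyi : p.primeCompl.map (ρ i) ≤ TW.comap (τ i j) := by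
      rintro x hx
      obtain ⟨a, ha, rfl⟩ := Submonoid.mem_map.mp hx
      exact Submonoid.mem_map_of_mem _ ha
    have hyj : p.primeCompl.map (ρ j) ≤ TW.comap (τ' i j) := by
      rintro x hx
      obtain ⟨a, ha, rfl⟩ := Submonoid.mem_map.mp hx
      have : (τ' i j) ((ρ j) a) = ((τ i j).comp (ρ i)) a := by
        rw [← RingHom.comp_apply, ← hcomm i j]
      rw [Submonoid.mem_comap, this]
      exact Submonoid.mem_map_of_mem _ ha
    set η : Localization (p.primeCompl.map (ρ i)) →+* LW :=
      IsLocalization.map LW (τ i j) hyi with hη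
    set η' : Localization (p.primeCompl.map (ρ j)) →+* LW :=
      IsLocalization.map LW (τ' i j) hyj with hη'
    have hfij : (τ' i j) ((ρ j) f) = (τ i j) ((ρ i) f) := by
      rw [← RingHom.comp_apply, ← RingHom.comp_apply, hcomm i j]
    have hinvi : η (u i) * ψW ((τ i j) ((ρ i) f)) = 1 := by
      rw [← IsLocalization.map_eq (S := Localization (p.primeCompl.map (ρ i))) hyi, ← map_mul,
        hu i, map_one]
    have hinvj : η' (u j) * ψW ((τ i j) ((ρ i) f)) = 1 := by
      rw [← hfij, ← IsLocalization.map_eq (S := Localization (p.primeCompl.map (ρ j))) hyj,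
        ← map_mul, hu j, map_one]
    have huu : η (u i) = η' (u j) := by
      calc η (u i) = η (u i) * (η' (u j) * ψW ((τ i j) ((ρ i) f))) := by rw [hinvj, mul_one]
        _ = η' (u j) * (η (u i) * ψW ((τ i j) ((ρ i) f))) := by ring
        _ = η' (u j) := by rw [hinvi, mul_one]
    have hση : (τ' i j) ((ρ j) σ) = (τ i j) ((ρ i) σ) := by
      rw [← RingHom.comp_apply, ← RingHom.comp_apply, hcomm i j]
    have hz : ψW ((τ i j) (b i) - (τ' i j) (b j)) = 0 := by
      rw [map_sub]
      have h1 : ψW ((τ i j) (b i)) = η (algebraMap (R i) _ (b i)) :=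
        (IsLocalization.map_eq (S := Localization (p.primeCompl.map (ρ i))) hyi _).symm
      have h2 : ψW ((τ' i j) (b j)) = η' (algebraMap (R j) _ (b j)) :=
        (IsLocalization.map_eq (S := Localization (p.primeCompl.map (ρ j))) hyj _).symm
      rw [h1, h2, hbu i, hbu j, map_mul, map_mul,
        IsLocalization.map_eq (S := Localization (p.primeCompl.map (ρ i))) hyi,
        IsLocalization.map_eq (S := Localization (p.primeCompl.map (ρ j))) hyj,
        hση, huu, sub_self]
    rw [IsLocalization.map_eq_zero_iff TW] at hz
    obtain ⟨m, hm⟩ := hz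
    obtain ⟨θij, hθij, hθijeq⟩ := Submonoid.mem_map.mp m.2
    exact ⟨θij, hθij, by rw [hθijeq]; exact hm⟩
  choose θ2 hθ2S hθ2 using hover
  set θ : A := (∏ i, θ1 i) * (∏ q : ι × ι, θ2 q.1 q.2) with hθd
  have hθS : θ ∈ p.primeCompl :=
    Submonoid.mul_mem _ (Submonoid.prod_mem _ fun i _ => hθ1S i)
      (Submonoid.prod_mem _ fun q _ => hθ2S q.1 q.2)
  set e : ∀ i, R i := fun i => (ρ i) θ * b i with he
  have hef : ∀ i, e i * (ρ i) f = (ρ i) (θ * σ) := by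
    intro i
    have hdvd : θ1 i ∣ θ := Dvd.dvd.mul_right (Finset.dvd_prod_of_mem _ (Finset.mem_univ i)) _
    obtain ⟨c, hc⟩ := hdvd
    simp only [he]
    have heq : (ρ i) θ * b i * (ρ i) f - (ρ i) (θ * σ)
        = (ρ i) c * ((ρ i) (θ1 i) * (b i * (ρ i) f - (ρ i) σ)) := by
      rw [hc]; simp only [map_mul]; ring
    have h0 : (ρ i) θ * b i * (ρ i) f - (ρ i) (θ * σ) = 0 := by rw [heq, hθ1 i, mul_zero]
    exact sub_eq_zero.mp h0
  have hcompat : ∀ i j, (τ i j) (e i) = (τ' i j) (e j) := by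
    intro i j
    have hdvd : θ2 i j ∣ θ := Dvd.dvd.mul_left
      (Finset.dvd_prod_of_mem (fun q : ι × ι => θ2 q.1 q.2) (Finset.mem_univ (i, j))) _
    obtain ⟨c, hc⟩ := hdvd
    have hθτ : (τ' i j) ((ρ j) θ) = (τ i j) ((ρ i) θ) := by
      rw [← RingHom.comp_apply, ← RingHom.comp_apply, hcomm i j]
    simp only [he, map_mul]
    rw [hθτ]
    have heq : (τ i j) ((ρ i) θ) * (τ i j) (b i) - (τ i j) ((ρ i) θ) * (τ' i j) (b j)
        = ((τ i j).comp (ρ i)) c * (((τ i j).comp (ρ i)) (θ2 i j)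
            * ((τ i j) (b i) - (τ' i j) (b j))) := by
      rw [hc]; simp only [map_mul, RingHom.comp_apply]; ring
    have h0 : (τ i j) ((ρ i) θ) * (τ i j) (b i) - (τ i j) ((ρ i) θ) * (τ' i j) (b j) = 0 :=
      heq.trans (by rw [hθ2 i j, mul_zero])
    exact sub_eq_zero.mp h0
  obtain ⟨a, ha⟩ := hglue e hcompat
  have hfin : a * f - θ * σ = 0 := by
    apply hinj
    intro i
    rw [map_sub, map_mul, ha i, hef i, sub_self]
  have hmem : θ * σ ∈ p := sub_eq_zero.mp hfin ▸ p.mul_mem_left a hfp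
  exact (Submonoid.mul_mem _ hθS hσS) hmem

open AlgebraicGeometry in
lemma mem_toSpecΓ_iff (X : AlgebraicGeometry.Scheme.{u}) (x : X) (a : Γ(X, ⊤)) :
    a ∈ (X.toSpecΓ.base x).asIdeal ↔ x ∉ X.basicOpen a := by
  have h := X.toSpecΓ_preimage_basicOpen a
  have h2 : x ∈ X.toSpecΓ ⁻¹ᵁ (PrimeSpectrum.basicOpen a) ↔ x ∈ X.basicOpen a := by rw [h]
  have h3 : (X.toSpecΓ.base x ∈ PrimeSpectrum.basicOpen a) ↔ x ∈ X.basicOpen a := h2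
  have h4 : a ∉ (X.toSpecΓ.base x).asIdeal ↔ x ∈ X.basicOpen a := h3
  tauto

open AlgebraicGeometry


open AlgebraicGeometry CategoryTheory

/-- For a noetherian separated scheme `X`, every prime of the ring of global sections of
height at most one is in the image of the canonical morphism `X ⟶ Spec Γ(X, ⊤)`. -/
theorem stmt_9 (X : Scheme.{u}) [IsNoetherian X] [X.IsSeparated]
    (p : PrimeSpectrum Γ(X, ⊤)) (hp : Order.height p ≤ 1) :
    ∃ x : X, X.toSpecΓ.base x = p := by
  by_contra hno
  have hno' : ∀ x : X, X.toSpecΓ.base x ≠ p := fun x h => hno ⟨x, h⟩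
  clear hno
  rename' hno' => hno
  classical
  -- finite affine cover
  have hexists : ∀ x : X, ∃ U : X.affineOpens, x ∈ U.1 := fun x => by
    obtain ⟨_, ⟨V, hV, rfl⟩, hxV, -⟩ := X.isBasis_affineOpens.exists_subset_of_mem_open
      (Set.mem_univ x) isOpen_univ
    exact ⟨⟨V, hV⟩, hxV⟩
  choose Ux hUx using hexists
  obtain ⟨t, ht⟩ := isCompact_univ.elim_finite_subcover (fun x : X => ((Ux x).1 : Set X))
    (fun x => (Ux x).1.2) (fun x _ => Set.mem_iUnion.mpr ⟨x, hUx x⟩)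
  set ι := {y : X // y ∈ t} with hι
  set U : ι → X.Opens := fun i => (Ux i.1).1 with hU
  have hcover : (⊤ : X.Opens) ≤ iSup U := by
    intro x _
    obtain ⟨y, hy⟩ := Set.mem_iUnion.mp (ht (Set.mem_univ x))
    obtain ⟨hyt, hxy⟩ := Set.mem_iUnion.mp hy
    exact (TopologicalSpace.Opens.mem_iSup).mpr ⟨⟨y, hyt⟩, hxy⟩
  haveI : Fintype ι := FinsetCoe.fintype t
  set ρ : ∀ i : ι, Γ(X, ⊤) →+* Γ(X, U i) :=
    fun i => (X.presheaf.map (homOfLE (le_top (a := U i))).op).hom with hρ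
  set τ : ∀ i j : ι, Γ(X, U i) →+* Γ(X, U i ⊓ U j) :=
    fun i j => (X.presheaf.map (TopologicalSpace.Opens.infLELeft (U i) (U j)).op).hom with hτ
  set τ' : ∀ i j : ι, Γ(X, U j) →+* Γ(X, U i ⊓ U j) :=
    fun i j => (X.presheaf.map (TopologicalSpace.Opens.infLERight (U i) (U j)).op).hom with hτ'
  have hcomm : ∀ i j, (τ i j).comp (ρ i) = (τ' i j).comp (ρ j) := by
    intro i j
    have h1 : (τ i j).comp (ρ i)
        = (X.presheaf.map ((TopologicalSpace.Opens.infLELeft (U i) (U j) ≫ homOfLE le_top).op)).hom := by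
      rw [op_comp, X.presheaf.map_comp]; rfl
    have h2 : (τ' i j).comp (ρ j)
        = (X.presheaf.map ((TopologicalSpace.Opens.infLERight (U i) (U j) ≫ homOfLE le_top).op)).hom := by
      rw [op_comp, X.presheaf.map_comp]; rfl
    rw [h1, h2]
    exact congrArg (fun g => (X.presheaf.map g).hom) (congrArg Quiver.Hom.op (Subsingleton.elim _ _))
  have hinj : ∀ a : Γ(X, ⊤), (∀ i, ρ i a = 0) → a = 0 := by
    intro a ha
    apply X.sheaf.eq_of_locally_eq' U ⊤ (fun i => homOfLE le_top) hcover a 0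
    intro i
    rw [map_zero]
    exact ha i
  have hglue : ∀ b : (∀ i, Γ(X, U i)), (∀ i j, τ i j (b i) = τ' i j (b j)) →
      ∃ a, ∀ i, ρ i a = b i := by
    intro b hb
    obtain ⟨a, ha, -⟩ := X.sheaf.existsUnique_gluing' U ⊤ (fun i => homOfLE le_top) hcover b hb
    exact ⟨a, ha⟩
  have hht : ∀ v w : Ideal Γ(X, ⊤), v.IsPrime → w.IsPrime → v < w → w < p.asIdeal → False := by
    intro v w hv hw hvw hwp
    set Vp : PrimeSpectrum Γ(X, ⊤) := ⟨v, hv⟩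
    set Wp : PrimeSpectrum Γ(X, ⊤) := ⟨w, hw⟩
    have hVW : Vp < Wp := hvw
    have hWp : Wp < p := hwp
    set c : LTSeries (PrimeSpectrum Γ(X, ⊤)) :=
      ((RelSeries.singleton _ Vp).snoc Wp (by simpa using hVW)).snoc p (by simpa using hWp)
      with hc
    have h2 : (2 : ℕ∞) ≤ Order.height p := by
      have := Order.length_le_height_last (p := c)
      simpa [hc] using this
    have : (2 : ℕ∞) ≤ 1 := h2.trans hp
    norm_num at this
  have hnp : ∀ (i : ι) (Q : Ideal Γ(X, U i)), Q.IsPrime → Q.comap (ρ i) ≠ p.asIdeal := by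
    intro i Q hQpr hQeq
    haveI := hQpr
    apply hno ((Ux i.1).2.fromSpec.base ⟨Q, hQpr⟩)
    have hchar : ∀ a : Γ(X, ⊤),
        (a ∈ (X.toSpecΓ.base ((Ux i.1).2.fromSpec.base ⟨Q, hQpr⟩)).asIdeal ↔ ρ i a ∈ Q) := by
      intro a
      rw [mem_toSpecΓ_iff]
      have hxU : (Ux i.1).2.fromSpec.base ⟨Q, hQpr⟩ ∈ (U i : X.Opens) := by
        have := (Ux i.1).2.range_fromSpec ▸
          Set.mem_range_self (f := ((Ux i.1).2.fromSpec).base) ⟨Q, hQpr⟩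
        exact this
      have hres : X.basicOpen (ρ i a) = U i ⊓ X.basicOpen a := Scheme.basicOpen_res X _ _
      have h1 : (Ux i.1).2.fromSpec ⁻¹ᵁ (X.basicOpen (ρ i a)) = PrimeSpectrum.basicOpen (ρ i a) :=
        (Ux i.1).2.fromSpec_preimage_basicOpen (ρ i a)
      have h2 : ((Ux i.1).2.fromSpec.base ⟨Q, hQpr⟩ ∈ X.basicOpen (ρ i a)) ↔
          ((⟨Q, hQpr⟩ : PrimeSpectrum Γ(X, U i)) ∈ PrimeSpectrum.basicOpen (ρ i a)) := by
        rw [← h1]; rfl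
      rw [PrimeSpectrum.mem_basicOpen] at h2
      constructor
      · intro hx
        by_contra hQa
        have hmem : (Ux i.1).2.fromSpec.base ⟨Q, hQpr⟩ ∈ X.basicOpen (ρ i a) := h2.mpr hQa
        rw [hres] at hmem
        exact hx hmem.2
      · intro hQa hx
        exact (h2.mp (by rw [hres]; exact ⟨hxU, hx⟩)) hQa
    apply PrimeSpectrum.ext
    apply Ideal.ext
    intro a
    rw [hchar a, ← hQeq]
    rfl
  haveI := p.isPrime
  haveI hNoeth : ∀ i : ι, IsNoetherianRing ↑Γ(X, U i) := fun i =>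
    IsLocallyNoetherian.component_noetherian (Ux i.1)
  exact abstract_core ρ τ τ' hcomm p.asIdeal hht hinj hglue hnp
end

section
/- Let f : X → Y be a morphism of schemes whose underlying continuous map of topological spaces is a homeomorphism. Then f is an affine morphism. -/
open AlgebraicGeometry CategoryTheory TopologicalSpace

universe u

lemma aux_isAffine_of_isHomeomorph {X Y : Scheme.{u}} [IsAffine Y] (f : X ⟶ Y)
    (hf : IsHomeomorph f.base) : IsAffine X := by
  set s : Set Γ(Y, ⊤) := {g | IsAffineOpen (f ⁻¹ᵁ Y.basicOpen g)} with hs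
  have hcov : ⨆ g : s, Y.basicOpen (g : Γ(Y, ⊤)) = ⊤ := by
    rw [eq_top_iff]
    rintro y -
    obtain ⟨x, rfl⟩ := hf.bijective.surjective y
    obtain ⟨_, ⟨U, hU, rfl⟩, hxU, -⟩ :=
      X.isBasis_affineOpens.exists_subset_of_mem_open (Set.mem_univ x) isOpen_univ
    have hfU : IsOpen (f.base '' (U : Set X)) := hf.isOpenMap _ U.2
    obtain ⟨_, ⟨_, ⟨⟨g, rfl⟩, rfl⟩⟩, hyg, hgU⟩ :=
      (isBasis_basicOpen Y).exists_subset_of_mem_open (Set.mem_image_of_mem _ hxU) hfU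
    have hsub : (f ⁻¹ᵁ Y.basicOpen g : Set X) ⊆ (U : Set X) := by
      intro z hz
      obtain ⟨w, hw, hwz⟩ := hgU hz
      rwa [← hf.bijective.injective hwz]
    refine Opens.mem_iSup.mpr ⟨⟨g, ?_⟩, hyg⟩
    show IsAffineOpen (f ⁻¹ᵁ Y.basicOpen g)
    rw [Scheme.preimage_basicOpen_top]
    have hle : X.basicOpen (f.appTop g) ≤ U := by
      intro z hz
      exact hsub (by rwa [Scheme.preimage_basicOpen_top])
    have heq : X.basicOpen (f.appTop g) =
        X.basicOpen (X.presheaf.map (homOfLE (le_top : U ≤ ⊤)).op (f.appTop g)) := by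
      rw [Scheme.basicOpen_res]; exact (inf_eq_right.mpr hle).symm
    rw [heq]
    exact hU.basicOpen _
  have hspan : Ideal.span s = ⊤ :=
    ((isAffineOpen_top Y).iSup_basicOpen_eq_self_iff (s := s)).mp hcov
  apply isAffine_of_isAffineOpen_basicOpen (f.appTop '' s)
  · rw [← Ideal.map_span (f.appTop.hom), hspan, Ideal.map_top]
  · rintro _ ⟨g, hg, rfl⟩
    rw [← Scheme.preimage_basicOpen_top]
    exact hg

/-- A morphism of schemes which is a homeomorphism on underlying topological spaces is an
affine morphism. -/
theorem stmt_10 {X Y : Scheme.{u}} (f : X ⟶ Y) (hf : IsHomeomorph f.base) :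
    IsAffineHom f := by
  constructor
  intro U hU
  have : IsAffine U.toScheme := hU
  have hres : IsHomeomorph (f ∣_ U).base := by
    rw [morphismRestrict_base]
    exact ⟨hf.continuous.restrictPreimage,
      hf.isOpenMap.restrictPreimage _,
      hf.bijective.injective.restrictPreimage _,
      hf.bijective.surjective.restrictPreimage _⟩
  exact aux_isAffine_of_isHomeomorph (f ∣_ U) hres
end

section
/- Let A be a noetherian commutative ring that is locally factorial, i.e. the localization A_𝔭 is a unique factorization domain for every prime ideal 𝔭 of A. Let 𝔞 ⊆ A be an ideal such that every minimal prime ideal over 𝔞 has height 1 (V(𝔞) is a hypersurface). Then the open subset D(𝔞) of Spec A is affine. -/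
open AlgebraicGeometry CategoryTheory


lemma lemA {A : Type*} [CommRing A] [IsNoetherianRing A] (𝔞 : Ideal A) :
    𝔞.minimalPrimes.Finite := by
  rw [Ideal.minimalPrimes_eq_comap]
  exact (minimalPrimes.finite_of_isNoetherianRing (A ⧸ 𝔞)).image _

lemma lemB {A : Type*} [CommRing A] {p : Ideal A} (hp : p.IsPrime)
    (hht : Order.height (⟨p, hp⟩ : PrimeSpectrum A) = 1)
    {r0 r1 : Ideal A} (h0 : r0.IsPrime) (h1 : r1.IsPrime)
    (h01 : r0 < r1) (h1p : r1 < p) : False := by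
  let c : LTSeries (PrimeSpectrum A) :=
    ⟨2, ![⟨r0, h0⟩, ⟨r1, h1⟩, ⟨p, hp⟩], by
      intro i
      fin_cases i <;> simpa [← PrimeSpectrum.asIdeal_lt_asIdeal] using (by assumption)⟩
  have := Order.length_le_height_last (p := c)
  have hlast : c.last = (⟨p, hp⟩ : PrimeSpectrum A) := rfl
  rw [hlast, hht] at this
  simp [c] at this


lemma lemC {A : Type*} [CommRing A] (q : Ideal A) [q.IsPrime] (𝔞 : Ideal A) (hfg : 𝔞.FG)
    (a : A)
    (h2 : 𝔞.map (algebraMap A (Localization.AtPrime q)) ≤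
      ((Ideal.span {a}).map (algebraMap A (Localization.AtPrime q))).radical) :
    ∃ g ∉ q, ∀ x ∈ 𝔞, g * x ∈ (Ideal.span {a}).radical := by
  classical
  obtain ⟨T, hT⟩ := hfg
  set φ := algebraMap A (Localization.AtPrime q)
  -- for each generator, find a multiplier
  have key : ∀ y : A, y ∈ 𝔞 → ∃ v : A, v ∉ q ∧ v * y ∈ (Ideal.span {a}).radical := by
    intro y hy
    have hy' : φ y ∈ ((Ideal.span {a}).map φ).radical := h2 (Ideal.mem_map_of_mem φ hy)
    obtain ⟨k, hk⟩ := Ideal.mem_radical_iff.mp hy'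
    rw [← map_pow] at hk
    rw [IsLocalization.mem_map_algebraMap_iff q.primeCompl] at hk
    obtain ⟨⟨c, s⟩, hcs⟩ := hk
    rw [← map_mul] at hcs
    obtain ⟨u, hu⟩ := (IsLocalization.eq_iff_exists q.primeCompl _).mp hcs
    -- u * (y^k * s) = u * c
    refine ⟨u * s, (u * s).2, ?_⟩
    refine Ideal.mem_radical_iff.mpr ⟨k + 1, ?_⟩
    have hmem : (u : A) * s * y ^ k ∈ Ideal.span {a} := by
      have : (u : A) * (y ^ k * s) = u * c := hu
      rw [show (u : A) * s * y ^ k = u * (y ^ k * s) by ring, this]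
      exact Ideal.mul_mem_left _ _ c.2
    have heq : ((u : A) * s * y) ^ (k + 1)
        = ((u : A) * s) ^ k * y * ((u : A) * s * y ^ k) := by ring
    rw [heq]
    exact Ideal.mul_mem_left _ _ hmem
  choose v hv1 hv2 using key
  refine ⟨∏ y ∈ T.attach, v y (hT ▸ Ideal.subset_span y.2), ?_, ?_⟩
  · intro hmem
    -- product of elements not in q lies in q.primeCompl
    have : (∏ y ∈ T.attach, v y (hT ▸ Ideal.subset_span y.2)) ∈ q.primeCompl :=
      Submonoid.prod_mem _ fun y _ => hv1 _ _
    exact this hmem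
  · intro x hx
    rw [← hT] at hx
    induction hx using Submodule.span_induction with
    | mem z hz =>
      have hz1 : z ∈ 𝔞 := hT ▸ Ideal.subset_span hz
      have hzT : (⟨z, hz⟩ : {x // x ∈ T}) ∈ T.attach := Finset.mem_attach _ _
      rw [← Finset.mul_prod_erase T.attach (fun y => v y (hT ▸ Ideal.subset_span y.2)) hzT,
        mul_comm (v _ _), mul_assoc]
      exact Ideal.mul_mem_left _ _ (hv2 z hz1)
    | zero => simp
    | add p q hp hq hp' hq' => rw [mul_add]; exact Ideal.add_mem _ hp' hq'
    | smul r p hp hp' =>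
      rw [smul_eq_mul, show _ * (r * p) = r * (_ * p) by ring]
      exact Ideal.mul_mem_left _ _ hp'

lemma lemD {A : Type*} [CommRing A] [IsNoetherianRing A]
    (hdom : ∀ (p : Ideal A) (hp : p.IsPrime),
      haveI := hp; IsDomain (Localization.AtPrime p))
    (hfac : ∀ (p : Ideal A) (hp : p.IsPrime),
      haveI := hp; haveI := hdom p hp;
      UniqueFactorizationMonoid (Localization.AtPrime p))
    (𝔞 : Ideal A)
    (hht : ∀ (p : Ideal A) (hp : p ∈ 𝔞.minimalPrimes),
      Order.height (⟨p, hp.1.1⟩ : PrimeSpectrum A) = 1)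
    (q : Ideal A) (hq : q.IsPrime) :
    ∃ g ∉ q, ∃ a ∈ 𝔞, ∀ x ∈ 𝔞, g * x ∈ (Ideal.span {a}).radical := by
  classical
  haveI := hq
  by_cases hq𝔞 : 𝔞 ≤ q
  swap
  · obtain ⟨g, hg𝔞, hgq⟩ := SetLike.not_le_iff_exists.mp hq𝔞
    exact ⟨g, hgq, g, hg𝔞, fun x hx =>
      Ideal.le_radical (Ideal.mem_span_singleton.mpr ⟨x, rfl⟩)⟩
  haveI := hdom q hq; haveI := hfac q hq
  set Aq := Localization.AtPrime q with hAq
  set φ := algebraMap A Aq with hφ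
  by_cases hbot : 𝔞.map φ = ⊥
  · obtain ⟨g, hg, h⟩ := lemC q 𝔞 (IsNoetherian.noetherian 𝔞) 0 (hbot ▸ bot_le)
    exact ⟨g, hg, 0, 𝔞.zero_mem, h⟩
  -- main case
  have hsub : {p : Ideal A | p ∈ 𝔞.minimalPrimes ∧ p ≤ q}.Finite :=
    (lemA 𝔞).subset (fun p hp => hp.1)
  set F := hsub.toFinset with hF
  have hmemF : ∀ p : Ideal A, p ∈ F ↔ p ∈ 𝔞.minimalPrimes ∧ p ≤ q := fun p =>
    Set.Finite.mem_toFinset _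
  -- each localized minimal prime is generated by a prime element
  have hstep : ∀ p : {p : Ideal A // p ∈ F}, ∃ x : Aq, Prime x ∧
      Ideal.map φ p.1 = Ideal.span {x} := by
    rintro ⟨p, hpF⟩
    obtain ⟨hpmin, hpq⟩ := (hmemF p).mp hpF
    haveI hpprime : p.IsPrime := hpmin.1.1
    have hdisj : Disjoint (q.primeCompl : Set A) (p : Set A) :=
      Set.disjoint_left.mpr (fun x hx hxp => hx (hpq hxp))
    haveI hPprime : (Ideal.map φ p).IsPrime :=
      IsLocalization.isPrime_of_isPrime_disjoint q.primeCompl Aq p hpprime hdisj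
    have hPne : Ideal.map φ p ≠ ⊥ := by
      intro h
      exact hbot (le_bot_iff.mp (h ▸ Ideal.map_mono hpmin.1.2))
    obtain ⟨x, hxmem, hxprime⟩ := hPprime.exists_mem_prime_of_ne_bot hPne
    refine ⟨x, hxprime, ?_⟩
    refine le_antisymm ?_ ((Ideal.span_singleton_le_iff_mem _).mpr hxmem)
    by_contra hcon
    have h1 : Ideal.span {x} < Ideal.map φ p :=
      lt_of_le_of_ne ((Ideal.span_singleton_le_iff_mem _).mpr hxmem)
        (fun h => hcon h.ge)
    have h0 : (⊥ : Ideal Aq) < Ideal.span {x} :=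
      bot_lt_iff_ne_bot.mpr (by
        simpa [Ideal.span_singleton_eq_bot] using hxprime.ne_zero)
    haveI : (Ideal.span {x}).IsPrime :=
      (Ideal.span_singleton_prime hxprime.ne_zero).mpr hxprime
    have hinj : Function.Injective (Ideal.comap φ : Ideal Aq → Ideal A) := by
      intro I J h
      have := congrArg (Ideal.map φ) h
      rwa [IsLocalization.map_comap q.primeCompl Aq,
        IsLocalization.map_comap q.primeCompl Aq] at this
    have hsm : StrictMono (Ideal.comap φ : Ideal Aq → Ideal A) := fun I J hIJ =>
      lt_of_le_of_ne (Ideal.comap_mono hIJ.le) (fun h => hIJ.ne (hinj h))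
    have hcomap : Ideal.comap φ (Ideal.map φ p) = p :=
      IsLocalization.comap_map_of_isPrime_disjoint q.primeCompl Aq hpprime hdisj
    haveI : (⊥ : Ideal Aq).IsPrime := Ideal.bot_prime
    refine lemB hpprime (hht p hpmin) (Ideal.IsPrime.comap φ (K := ⊥))
      (Ideal.IsPrime.comap φ (K := Ideal.span {x})) (hsm h0) ?_
    have := hsm h1
    rwa [hcomap] at this
  choose xe hxe1 hxe2 using hstep
  set X : Aq := ∏ p ∈ F.attach, xe p with hX
  -- every prime over 𝔞.map φ contains some localized minimal prime
  have hover : ∀ Q : Ideal Aq, Q.IsPrime → Ideal.map φ 𝔞 ≤ Q →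
      ∃ p : {p : Ideal A // p ∈ F}, Ideal.map φ p.1 ≤ Q := by
    intro Q hQ hle
    haveI := hQ
    haveI : (Ideal.comap φ Q).IsPrime := Ideal.IsPrime.comap φ
    have h𝔞p' : 𝔞 ≤ Ideal.comap φ Q := Ideal.map_le_iff_le_comap.mp hle
    have hp'q : Ideal.comap φ Q ≤ q := by
      intro z hz
      by_contra hzq
      have hu : IsUnit (φ z) := IsLocalization.map_units (M := q.primeCompl) Aq ⟨z, hzq⟩
      exact hQ.ne_top (Q.eq_top_of_isUnit_mem hz hu)
    obtain ⟨p, hpmin, hpp'⟩ := Ideal.exists_minimalPrimes_le h𝔞p'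
    refine ⟨⟨p, (hmemF p).mpr ⟨hpmin, hpp'.trans hp'q⟩⟩, ?_⟩
    exact (Ideal.map_mono hpp').trans Ideal.map_comap_le
  have hXrad : X ∈ (Ideal.map φ 𝔞).radical := by
    rw [Ideal.radical_eq_sInf]
    refine Submodule.mem_sInf.mpr ?_
    rintro Q ⟨hQle, hQ⟩
    obtain ⟨p, hpQ⟩ := hover Q hQ hQle
    have hxQ : xe p ∈ Q := hpQ ((hxe2 p) ▸ Ideal.mem_span_singleton_self _)
    obtain ⟨c, hc⟩ := Finset.dvd_prod_of_mem xe (Finset.mem_attach F p)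
    rw [hX, hc]
    exact Ideal.mul_mem_right _ _ hxQ
  obtain ⟨n, hXn⟩ := Ideal.mem_radical_iff.mp hXrad
  rw [IsLocalization.mem_map_algebraMap_iff q.primeCompl] at hXn
  obtain ⟨⟨a, s⟩, has⟩ := hXn
  have h2 : Ideal.map φ 𝔞 ≤ (Ideal.map φ (Ideal.span {(a : A)})).radical := by
    rw [Ideal.radical_eq_sInf]
    refine le_sInf ?_
    rintro Q ⟨hQle, hQprime⟩
    haveI := hQprime
    have hφa : φ a ∈ Q := hQle (Ideal.mem_map_of_mem φ (Ideal.mem_span_singleton_self _))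
    rw [← has] at hφa
    have hXQ : X ∈ Q := by
      rcases hQprime.mem_or_mem hφa with h | h
      · exact hQprime.mem_of_pow_mem _ h
      · exact absurd (Q.eq_top_of_isUnit_mem h
          (IsLocalization.map_units (M := q.primeCompl) Aq s)) hQprime.ne_top
    rw [hX, Ideal.IsPrime.prod_mem_iff] at hXQ
    obtain ⟨p, _, hxQ⟩ := hXQ
    calc Ideal.map φ 𝔞 ≤ Ideal.map φ p.1 := Ideal.map_mono ((hmemF p.1).mp p.2).1.1.2
      _ = Ideal.span {xe p} := hxe2 p
      _ ≤ Q := (Ideal.span_singleton_le_iff_mem _).mpr hxQ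
  obtain ⟨g, hg, h⟩ := lemC q 𝔞 (IsNoetherian.noetherian 𝔞) a h2
  exact ⟨g, hg, a, a.2, h⟩

/-- In a noetherian locally factorial ring, the complement of every hypersurface is
affine. -/
theorem stmt_12 {A : Type*} [CommRing A] [IsNoetherianRing A]
    (hdom : ∀ (p : Ideal A) (hp : p.IsPrime),
      haveI := hp; IsDomain (Localization.AtPrime p))
    (hfac : ∀ (p : Ideal A) (hp : p.IsPrime),
      haveI := hp; haveI := hdom p hp;
      UniqueFactorizationMonoid (Localization.AtPrime p))
    (𝔞 : Ideal A)
    (hht : ∀ (p : Ideal A) (hp : p ∈ 𝔞.minimalPrimes),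
      Order.height (⟨p, hp.1.1⟩ : PrimeSpectrum A) = 1)
    (U : (Spec (CommRingCat.of A)).Opens)
    (hU : U.1 = {p : PrimeSpectrum A | ¬ 𝔞 ≤ p.asIdeal}) :
    IsAffineOpen U := by
  classical
  set S : Set A := {g : A | ∃ a ∈ 𝔞, ∀ x ∈ 𝔞, g * x ∈ (Ideal.span {a}).radical} with hSdef
  have hS : Ideal.span S = ⊤ := by
    by_contra h
    obtain ⟨m, hm, hle⟩ := Ideal.exists_le_maximal _ h
    obtain ⟨g, hg, a, ha, hga⟩ := lemD hdom hfac 𝔞 hht m hm.isPrime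
    exact hg (hle (Ideal.subset_span ⟨a, ha, hga⟩))
  obtain ⟨s', hs'sub, hs'top⟩ := (Ideal.span_eq_top_iff_finite S).mp hS
  set ψ : CommRingCat.of A ⟶ Γ(Spec (CommRingCat.of A), U) :=
    (Scheme.ΓSpecIso (CommRingCat.of A)).inv ≫ (Spec (CommRingCat.of A)).presheaf.map (homOfLE le_top).op with hψ
  apply isAffineOpen_of_isAffineOpen_basicOpen U (ψ '' s')
  · rw [← Ideal.map_span ψ.hom, hs'top, Ideal.map_top]
  · rintro _ ⟨g, hgs', rfl⟩
    obtain ⟨a, ha, hga⟩ := hs'sub hgs'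
    have h0 : ψ g = (Spec (CommRingCat.of A)).presheaf.map (homOfLE (le_top (a := U))).op
        ((Scheme.ΓSpecIso (CommRingCat.of A)).inv g) := rfl
    have h1 : (Spec (CommRingCat.of A)).basicOpen ((Scheme.ΓSpecIso (CommRingCat.of A)).inv g)
        = (PrimeSpectrum.basicOpen g : (Spec (CommRingCat.of A)).Opens) :=
      basicOpen_eq_of_affine (R := CommRingCat.of A) g
    rw [h0, Scheme.basicOpen_res, h1]
    have h2 : U ⊓ (PrimeSpectrum.basicOpen g : (Spec (CommRingCat.of A)).Opens) =
        (PrimeSpectrum.basicOpen (g * a) : (Spec (CommRingCat.of A)).Opens) := by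
      apply TopologicalSpace.Opens.ext
      show U.1 ∩ _ = _
      rw [hU]
      ext p
      simp only [Set.mem_inter_iff, Set.mem_setOf_eq, SetLike.mem_coe,
        PrimeSpectrum.mem_basicOpen]
      constructor
      · rintro ⟨h𝔞p, hgp⟩
        intro hmul
        have hap : a ∈ p.asIdeal := (p.isPrime.mem_or_mem hmul).resolve_left hgp
        apply h𝔞p
        intro x hx
        have := hga x hx
        have hrad : (Ideal.span {a}).radical ≤ p.asIdeal := by
          rw [← p.isPrime.radical]
          exact Ideal.radical_mono ((Ideal.span_singleton_le_iff_mem _).mpr hap)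
        exact (p.isPrime.mem_or_mem (hrad this)).resolve_left hgp
      · intro hmul
        have hgp : g ∉ p.asIdeal := fun h => hmul (Ideal.mul_mem_right _ _ h)
        have hap : a ∉ p.asIdeal := fun h => hmul (Ideal.mul_mem_left _ _ h)
        exact ⟨fun hle => hap (hle ha), hgp⟩
    rw [h2]
    exact IsAffineOpen.Spec_basicOpen _
end

section
/- Let A be a commutative ring and U ⊆ Spec A an open subset that is affine, i.e. the corresponding open subscheme is an affine scheme. Then the ring of sections Γ(U, O_{Spec A}) is an A-algebra of finite type. -/
open AlgebraicGeometry CategoryTheory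

/-- The ring of sections over an affine open subset of `Spec A` is an `A`-algebra of
finite type, where the `A`-algebra structure is induced by restriction of global
sections. -/
theorem stmt_13 {A : Type u} [CommRing A]
    (U : (Spec (CommRingCat.of A)).Opens) (hU : IsAffineOpen U) :
    RingHom.FiniteType
      ((Scheme.ΓSpecIso (CommRingCat.of A)).inv ≫
        (Spec (CommRingCat.of A)).presheaf.map (homOfLE le_top).op :
          CommRingCat.of A ⟶ Γ(Spec (CommRingCat.of A), U)).hom := by
  have h1 : RingHom.FiniteType (Scheme.Hom.appLE (𝟙 (Spec (CommRingCat.of A))) ⊤ U (by simp)).hom :=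
    Scheme.Hom.finiteType_appLE (𝟙 (Spec (CommRingCat.of A)))
      (isAffineOpen_top _) hU (by simp)
  have h2 : (Scheme.Hom.appLE (𝟙 (Spec (CommRingCat.of A))) ⊤ U (by simp)) =
      (Spec (CommRingCat.of A)).presheaf.map (homOfLE le_top).op := by
    simp [Scheme.Hom.appLE]
  rw [h2] at h1
  exact h1.comp (RingHom.FiniteType.of_surjective _
    (ConcreteCategory.bijective_of_isIso (Scheme.ΓSpecIso (CommRingCat.of A)).inv).2)
end

section
/- Let A be a noetherian integral domain and 𝔞 ⊆ A an ideal such that the open subset U = D(𝔞) ⊆ Spec A is not affine but its ring of sections B = Γ(U, O_{Spec A}) is noetherian. Then the extended ideal 𝔞B (the ideal of B generated by the image of 𝔞 under the restriction map A → B) has height at least 2. -/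
open AlgebraicGeometry CategoryTheory TopologicalSpace

lemma aux_exists_b' {B : Type*} [CommRing B] [IsDomain B] [IsNoetherianRing B]
    (p : Ideal B) (hp : p.IsPrime) (t : B) (htp : t ∈ p) (ht0 : t ≠ 0)
    (hmin : ∀ q : Ideal B, q.IsPrime → q ≤ p → q = ⊥ ∨ q = p) :
    ∃ b : B, b ∉ Ideal.span {t} ∧ ∀ f ∈ p, f * b ∈ Ideal.span {t} := by
  classical
  haveI := hp
  set L := Localization.AtPrime p with hLdef
  set ψ : B →+* L := algebraMap B L with hψdef
  have hSle : p.primeCompl ≤ nonZeroDivisors B := fun s hs =>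
    mem_nonZeroDivisors_of_ne_zero (fun h => hs (by rw [h]; exact p.zero_mem))
  have hinj : Function.Injective ψ := IsLocalization.injective L hSle
  haveI hnoethL : IsNoetherianRing L := IsLocalization.isNoetherianRing p.primeCompl L ‹_›
  set m := IsLocalRing.maximalIdeal L with hmdef
  have hmap : Ideal.map ψ p = m := Localization.AtPrime.map_eq_maximalIdeal
  set tL := ψ t with htLdef
  have htLm : tL ∈ m := hmap ▸ Ideal.mem_map_of_mem ψ htp
  -- every prime of L containing tL contains m
  have hradm : m ≤ (Ideal.span {tL}).radical := by
    rw [Ideal.radical_eq_sInf]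
    refine le_sInf ?_
    rintro Q ⟨hQle, hQprime⟩
    have hcom : (Ideal.comap ψ Q).IsPrime := hQprime.comap _
    have hle : Ideal.comap ψ Q ≤ p := by
      intro x hx
      by_contra hxp
      exact hQprime.ne_top (Ideal.eq_top_of_isUnit_mem _ hx
        (IsLocalization.map_units L (⟨x, hxp⟩ : p.primeCompl)))
    have htq : t ∈ Ideal.comap ψ Q := by
      simp only [Ideal.mem_comap]
      exact hQle (Ideal.subset_span rfl)
    have hQp : Ideal.comap ψ Q = p := by
      rcases hmin _ hcom hle with h | h
      · rw [h] at htq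
        exact absurd ((Ideal.mem_bot).mp htq) ht0
      · exact h
    calc m = Ideal.map ψ p := hmap.symm
      _ = Ideal.map ψ (Ideal.comap ψ Q) := by rw [hQp]
      _ ≤ Q := Ideal.map_comap_le
  obtain ⟨n, hn⟩ := Ideal.exists_radical_pow_le_of_fg (Ideal.span {tL}) (IsNoetherian.noetherian _)
  have hex : ∃ k, m ^ k ≤ Ideal.span {tL} :=
    ⟨n, le_trans (Ideal.pow_right_mono hradm n) hn⟩
  have hn₀spec := Nat.find_spec hex
  have hn₀pos : Nat.find hex ≠ 0 := by
    intro h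
    rw [h, pow_zero, Ideal.one_eq_top, top_le_iff, Ideal.span_singleton_eq_top] at hn₀spec
    exact (IsLocalRing.maximalIdeal.isMaximal L).ne_top
      (Ideal.eq_top_of_isUnit_mem _ htLm hn₀spec)
  obtain ⟨k, hk⟩ : ∃ k, Nat.find hex = k + 1 :=
    ⟨Nat.find hex - 1, (Nat.succ_pred_eq_of_pos (Nat.pos_of_ne_zero hn₀pos)).symm⟩
  have hnotk : ¬ m ^ k ≤ Ideal.span {tL} := Nat.find_min hex (by omega)
  obtain ⟨y, hy, hy'⟩ := SetLike.not_le_iff_exists.mp hnotk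
  have hmy : ∀ f ∈ m, f * y ∈ Ideal.span {tL} := by
    intro f hf
    have : f * y ∈ m ^ (k + 1) := by
      rw [pow_succ']
      exact Ideal.mul_mem_mul hf hy
    rw [← hk] at this
    exact hn₀spec this
  obtain ⟨⟨b₀, s₀⟩, hb₀⟩ := IsLocalization.surj p.primeCompl y
  obtain ⟨F, hF⟩ := (IsNoetherian.noetherian p : p.FG)
  have key : ∀ f ∈ F, ∃ s ∈ p.primeCompl, ∃ c, f * b₀ * s = t * c := by
    intro f hf
    have hfp : f ∈ p := by rw [← hF]; exact Ideal.subset_span hf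
    have hfm : ψ f ∈ m := hmap ▸ Ideal.mem_map_of_mem ψ hfp
    obtain ⟨z, hz⟩ := Ideal.mem_span_singleton'.mp (hmy _ hfm)
    obtain ⟨⟨c, s⟩, hcs⟩ := IsLocalization.surj p.primeCompl (z * ψ s₀)
    refine ⟨s, s.2, c, hinj ?_⟩
    have : ψ f * (y * ψ s₀) * ψ s = (z * tL) * ψ s₀ * ψ s := by
      rw [hz]; ring
    rw [hb₀] at this
    calc ψ (f * b₀ * s) = ψ f * ψ b₀ * ψ s := by simp [map_mul]
      _ = (z * tL) * ψ s₀ * ψ s := this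
      _ = tL * (z * ψ s₀ * ψ s) := by ring
      _ = tL * ψ c := by rw [hcs]
      _ = ψ (t * c) := by simp [map_mul, htLdef]
  choose! sfn hsfn cfn hcfn using key
  set s : B := ∏ f ∈ F, sfn f with hsdef
  have hscompl : s ∈ p.primeCompl := Submonoid.prod_mem _ (fun f hf => hsfn f hf)
  refine ⟨b₀ * s, ?_, ?_⟩
  · intro hmem
    obtain ⟨c, hc⟩ := Ideal.mem_span_singleton'.mp hmem
    -- c * t = b₀ * s
    apply hy'
    have hu : IsUnit (ψ (s₀ * s)) :=
      IsLocalization.map_units L (⟨s₀ * s, Submonoid.mul_mem _ s₀.2 hscompl⟩ : p.primeCompl)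
    rw [Ideal.mem_span_singleton']
    refine ⟨ψ c * ↑hu.unit⁻¹, ?_⟩
    have h1 : y * ψ (s₀ * s) = ψ c * tL := by
      calc y * ψ (s₀ * s) = (y * ψ s₀) * ψ s := by rw [map_mul]; ring
        _ = ψ b₀ * ψ s := by rw [hb₀]
        _ = ψ (b₀ * s) := by rw [map_mul]
        _ = ψ (c * t) := by rw [hc]
        _ = ψ c * tL := by rw [map_mul]
    calc ψ c * ↑hu.unit⁻¹ * tL = (ψ c * tL) * ↑hu.unit⁻¹ := by ring
      _ = (y * ψ (s₀ * s)) * ↑hu.unit⁻¹ := by rw [h1]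
      _ = y * (↑hu.unit * ↑hu.unit⁻¹) := by rw [IsUnit.unit_spec]; ring
      _ = y := by rw [Units.mul_inv, mul_one]
  · -- all of p multiplies b into (t)
    have hF' : Ideal.span (↑F : Set B) = p := by
      rw [← Ideal.submodule_span_eq]; exact hF
    have hcolon : p ≤ (Ideal.span {t}).colon (Ideal.span {b₀ * s}) := by
      rw [← hF', Ideal.span_le]
      intro f hf
      rw [SetLike.mem_coe, Ideal.mem_colon_span_singleton]
      rw [Ideal.mem_span_singleton]
      have : s = sfn f * ∏ g ∈ F.erase f, sfn g := (Finset.mul_prod_erase F sfn hf).symm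
      refine ⟨cfn f * ∏ g ∈ F.erase f, sfn g, ?_⟩
      calc f * (b₀ * s) = (f * b₀ * sfn f) * ∏ g ∈ F.erase f, sfn g := by rw [this]; ring
        _ = t * cfn f * ∏ g ∈ F.erase f, sfn g := by rw [hcfn f hf]
        _ = t * (cfn f * ∏ g ∈ F.erase f, sfn g) := by ring
    intro f hf
    have := hcolon hf
    rwa [Ideal.mem_colon_span_singleton] at this

set_option maxHeartbeats 2000000 in
lemma aux_geom {X : Scheme.{v}} [AlgebraicGeometry.IsIntegral X] (U : X.Opens) [Nonempty U]
    [IsNoetherianRing Γ(X, U)]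
    (p : Ideal Γ(X, U)) (hprime : p.IsPrime)
    (t : Γ(X, U)) (htp : t ∈ p) (ht0 : t ≠ 0)
    (hmin : ∀ q : Ideal Γ(X, U), q.IsPrime → q ≤ p → q = ⊥ ∨ q = p)
    {ι : Type v} (w : ι → Γ(X, U)) (hwp : ∀ i, w i ∈ p)
    (hcover : U ≤ ⨆ i, X.basicOpen (w i)) : False := by
  haveI : IsDomain Γ(X, U) := inferInstance
  obtain ⟨b, hb1, hb2⟩ := aux_exists_b' p hprime t htp ht0 hmin
  set V : ι → X.Opens := fun i => X.basicOpen (w i) with hVdef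
  have hVU : ∀ i, V i ≤ U := fun i => X.basicOpen_le (w i)
  have hunit : ∀ i, IsUnit (X.presheaf.map (homOfLE (hVU i)).op (w i)) := fun i =>
    RingedSpace.isUnit_res_basicOpen _ (w i)
  have hcex : ∀ i, ∃ ci, w i * b = t * ci := by
    intro i
    obtain ⟨ci, hci⟩ := Ideal.mem_span_singleton'.mp (hb2 _ (hwp i))
    exact ⟨ci, by rw [← hci]; ring⟩
  choose c hc using hcex
  have res_res : ∀ {V₁ V₂ : X.Opens} (f : V₂ ⟶ V₁) (g : V₁ ⟶ U) (z : Γ(X, U)),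
      X.presheaf.map f.op (X.presheaf.map g.op z) = X.presheaf.map (f ≫ g).op z := by
    intro V₁ V₂ f g z
    rw [← comp_apply, ← Functor.map_comp]
    rfl
  let sf : ∀ i, Γ(X, V i) := fun i =>
    X.presheaf.map (homOfLE (hVU i)).op (c i) * ↑(hunit i).unit⁻¹
  have hcompat : ∀ i j : ι,
      (X.sheaf).1.map (Opens.infLELeft (V i) (V j)).op (sf i) =
      (X.sheaf).1.map (Opens.infLERight (V i) (V j)).op (sf j) := by
    intro i j
    have hijB : c i * w j = c j * w i := by
      apply mul_left_cancel₀ ht0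
      calc t * (c i * w j) = (w i * b) * w j := by rw [hc i]; ring
        _ = (w j * b) * w i := by ring
        _ = (t * c j) * w i := by rw [hc j]
        _ = t * (c j * w i) := by ring
    show X.presheaf.map (Opens.infLELeft (V i) (V j)).op
        (X.presheaf.map (homOfLE (hVU i)).op (c i) * ↑(hunit i).unit⁻¹) =
      X.presheaf.map (Opens.infLERight (V i) (V j)).op
        (X.presheaf.map (homOfLE (hVU j)).op (c j) * ↑(hunit j).unit⁻¹)
    set ρ₁ := X.presheaf.map (Opens.infLELeft (V i) (V j)).op with hρ₁
    set ρ₂ := X.presheaf.map (Opens.infLERight (V i) (V j)).op with hρ₂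
    set ρU := X.presheaf.map ((Opens.infLELeft (V i) (V j)) ≫ homOfLE (hVU i)).op with hρU
    have E1 : ∀ z : Γ(X, U), ρ₁ (X.presheaf.map (homOfLE (hVU i)).op z) = ρU z := by
      intro z; rw [hρ₁, hρU, res_res]
    have E2 : ∀ z : Γ(X, U), ρ₂ (X.presheaf.map (homOfLE (hVU j)).op z) = ρU z := by
      intro z; rw [hρ₂, hρU, res_res]; rfl
    have hu1 : IsUnit (ρ₁ (X.presheaf.map (homOfLE (hVU i)).op (w i))) :=
      (hunit i).map ρ₁.hom
    have hu2 : IsUnit (ρ₂ (X.presheaf.map (homOfLE (hVU j)).op (w j))) :=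
      (hunit j).map ρ₂.hom
    rw [map_mul, map_mul]
    refine (hu1.mul hu2).mul_left_cancel ?_
    have k1 : X.presheaf.map (homOfLE (hVU i)).op (w i) * ↑(hunit i).unit⁻¹ = 1 :=
      (hunit i).mul_val_inv
    have k2 : X.presheaf.map (homOfLE (hVU j)).op (w j) * ↑(hunit j).unit⁻¹ = 1 :=
      (hunit j).mul_val_inv
    calc (ρ₁ (X.presheaf.map (homOfLE (hVU i)).op (w i)) *
          ρ₂ (X.presheaf.map (homOfLE (hVU j)).op (w j))) *
          (ρ₁ (X.presheaf.map (homOfLE (hVU i)).op (c i)) * ρ₁ ↑(hunit i).unit⁻¹)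
        = (ρ₁ (X.presheaf.map (homOfLE (hVU i)).op (w i)) * ρ₁ ↑(hunit i).unit⁻¹) *
          (ρ₁ (X.presheaf.map (homOfLE (hVU i)).op (c i)) *
           ρ₂ (X.presheaf.map (homOfLE (hVU j)).op (w j))) := by ring
      _ = (ρ₁ (X.presheaf.map (homOfLE (hVU i)).op (c i)) *
           ρ₂ (X.presheaf.map (homOfLE (hVU j)).op (w j))) := by
            rw [← map_mul, k1, map_one, one_mul]
      _ = ρU (c i) * ρU (w j) := by rw [E1, E2]
      _ = ρU (c i * w j) := by rw [map_mul]
      _ = ρU (c j * w i) := by rw [hijB]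
      _ = ρU (c j) * ρU (w i) := by rw [map_mul]
      _ = (ρ₂ (X.presheaf.map (homOfLE (hVU j)).op (c j)) *
           ρ₁ (X.presheaf.map (homOfLE (hVU i)).op (w i))) := by rw [E2, E1]
      _ = (ρ₂ (X.presheaf.map (homOfLE (hVU j)).op (w j)) * ρ₂ ↑(hunit j).unit⁻¹) *
          (ρ₂ (X.presheaf.map (homOfLE (hVU j)).op (c j)) *
           ρ₁ (X.presheaf.map (homOfLE (hVU i)).op (w i))) := by
            rw [← map_mul, k2, map_one, one_mul]
      _ = (ρ₁ (X.presheaf.map (homOfLE (hVU i)).op (w i)) *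
          ρ₂ (X.presheaf.map (homOfLE (hVU j)).op (w j))) *
          (ρ₂ (X.presheaf.map (homOfLE (hVU j)).op (c j)) * ρ₂ ↑(hunit j).unit⁻¹) := by ring
  have hglue : ∃! S : Γ(X, U), ∀ i : ι, X.presheaf.map (homOfLE (hVU i)).op S = sf i := by
    apply TopCat.Sheaf.existsUnique_gluing' X.sheaf V U (fun i => homOfLE (hVU i)) hcover sf
      hcompat
  obtain ⟨S, hS, -⟩ := hglue
  have hfinal : t * S = b := by
    apply TopCat.Sheaf.eq_of_locally_eq' X.sheaf V U (fun i => homOfLE (hVU i)) hcover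
    intro i
    show X.presheaf.map (homOfLE (hVU i)).op (t * S) = X.presheaf.map (homOfLE (hVU i)).op b
    rw [map_mul]
    have hSi : X.presheaf.map (homOfLE (hVU i)).op S = sf i := hS i
    rw [hSi]
    show X.presheaf.map (homOfLE (hVU i)).op t *
        (X.presheaf.map (homOfLE (hVU i)).op (c i) * ↑(hunit i).unit⁻¹) =
        X.presheaf.map (homOfLE (hVU i)).op b
    have h1 : X.presheaf.map (homOfLE (hVU i)).op t *
        X.presheaf.map (homOfLE (hVU i)).op (c i) =
        X.presheaf.map (homOfLE (hVU i)).op (w i) *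
        X.presheaf.map (homOfLE (hVU i)).op b := by
      rw [← map_mul, ← map_mul, ← hc i]
    rw [← mul_assoc, h1,
      mul_comm (X.presheaf.map (homOfLE (hVU i)).op (w i))
        (X.presheaf.map (homOfLE (hVU i)).op b),
      mul_assoc, (hunit i).mul_val_inv, mul_one]
  exact hb1 (Ideal.mem_span_singleton'.mpr ⟨S, by rw [mul_comm]; exact hfinal⟩)


/-- If `U = D(𝔞)` is a non-affine open subset of the spectrum of a noetherian domain `A`
whose ring of sections `B` is noetherian, then every minimal prime over the extended ideal
`𝔞B` has height at least two. -/
theorem stmt_14 {A : Type u} [CommRing A] [IsDomain A] [IsNoetherianRing A]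
    (𝔞 : Ideal A) (U : (Spec (CommRingCat.of A)).Opens)
    (hU : U.1 = {p : PrimeSpectrum A | ¬ 𝔞 ≤ p.asIdeal})
    (hnaff : ¬ IsAffineOpen U)
    (hnoeth : IsNoetherianRing Γ(Spec (CommRingCat.of A), U)) :
    ∀ (p : Ideal Γ(Spec (CommRingCat.of A), U))
      (hp : p ∈ (𝔞.map
        (((Scheme.ΓSpecIso (CommRingCat.of A)).inv ≫
          (Spec (CommRingCat.of A)).presheaf.map (homOfLE le_top).op).hom :
            A →+* Γ(Spec (CommRingCat.of A), U))).minimalPrimes),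
      2 ≤ Order.height (⟨p, hp.1.1⟩ : PrimeSpectrum Γ(Spec (CommRingCat.of A), U)) := by
  intro p hp
  by_contra hcon
  haveI := hnoeth
  haveI : IsDomain (CommRingCat.of A) := inferInstanceAs (IsDomain A)
  have hUne : U ≠ ⊥ := fun h => hnaff (by rw [h]; exact isAffineOpen_bot _)
  have hUnon : Set.Nonempty (U : Set (Spec (CommRingCat.of A))) :=
    (TopologicalSpace.Opens.ne_bot_iff_nonempty U).mp hUne
  haveI hNU : Nonempty U := hUnon.to_subtype
  haveI : IsDomain Γ(Spec (CommRingCat.of A), U) := inferInstance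
  -- the ring map
  let φ : A →+* Γ(Spec (CommRingCat.of A), U) :=
    (((Scheme.ΓSpecIso (CommRingCat.of A)).inv ≫
      (Spec (CommRingCat.of A)).presheaf.map (homOfLE le_top).op).hom :
        A →+* Γ(Spec (CommRingCat.of A), U))
  have hple : Ideal.map φ 𝔞 ≤ p := hp.1.2
  -- φ is injective
  have hφinj : Function.Injective φ := by
    have h2 : Function.Injective
        ((Spec (CommRingCat.of A)).presheaf.map (homOfLE (le_top : U ≤ ⊤)).op) :=
      map_injective_of_isIntegral _ (homOfLE le_top)
    have h3 : Function.Injective ((Scheme.ΓSpecIso (CommRingCat.of A)).inv) :=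
      (ConcreteCategory.bijective_of_isIso _).injective
    intro a b hab
    have key : ∀ x : A, φ x = (Spec (CommRingCat.of A)).presheaf.map
        (homOfLE (le_top : U ≤ ⊤)).op
        ((Scheme.ΓSpecIso (CommRingCat.of A)).inv x) := fun x => rfl
    rw [key a, key b] at hab
    exact h3 (h2 hab)
  -- 𝔞 is nonzero
  have h𝔞 : 𝔞 ≠ ⊥ := by
    intro h
    apply hUne
    apply TopologicalSpace.Opens.ext
    show U.1 = (⊥ : (Spec (CommRingCat.of A)).Opens).1
    rw [hU, h]
    ext x
    simp
    exact fun h => h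
  obtain ⟨g₀, hg₀𝔞, hg₀⟩ := Submodule.exists_mem_ne_zero_of_ne_bot h𝔞
  have htp : φ g₀ ∈ p := hple (Ideal.mem_map_of_mem φ hg₀𝔞)
  have ht0 : φ g₀ ≠ 0 := fun h => hg₀ (hφinj (by rw [h, map_zero]))
  -- no primes strictly between ⊥ and p
  have hmin : ∀ q : Ideal Γ(Spec (CommRingCat.of A), U),
      q.IsPrime → q ≤ p → q = ⊥ ∨ q = p := by
    intro q hq hqp
    by_contra hcontra
    push_neg at hcontra
    obtain ⟨hq0, hqp'⟩ := hcontra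
    apply hcon
    have h01 : ((⟨⊥, Ideal.bot_prime⟩ :
        PrimeSpectrum Γ(Spec (CommRingCat.of A), U))) < ⟨q, hq⟩ := by
      rw [← PrimeSpectrum.asIdeal_lt_asIdeal]
      exact Ne.bot_lt hq0
    have h12 : ((⟨q, hq⟩ : PrimeSpectrum Γ(Spec (CommRingCat.of A), U))) < ⟨p, hp.1.1⟩ := by
      rw [← PrimeSpectrum.asIdeal_lt_asIdeal]
      exact lt_of_le_of_ne hqp hqp'
    have hh := Order.length_le_height_last
      (p := ((RelSeries.singleton
        {(a, b) : PrimeSpectrum Γ(Spec (CommRingCat.of A), U) ×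
          PrimeSpectrum Γ(Spec (CommRingCat.of A), U) | a < b}
        ⟨⊥, Ideal.bot_prime⟩).snoc ⟨q, hq⟩ h01).snoc ⟨p, hp.1.1⟩ h12)
    exact hh
  -- the covering family
  have hcover : U ≤ ⨆ g : {g : A // g ∈ 𝔞},
      (Spec (CommRingCat.of A)).basicOpen (φ g.1) := by
    have hVeq : ∀ g : {g : A // g ∈ 𝔞},
        (Spec (CommRingCat.of A)).basicOpen (φ g.1)
          = U ⊓ PrimeSpectrum.basicOpen g.1 := by
      intro g
      have hres : φ g.1 = (Spec (CommRingCat.of A)).presheaf.map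
          (homOfLE (le_top : U ≤ ⊤)).op
          ((Scheme.ΓSpecIso (CommRingCat.of A)).inv g.1) := rfl
      rw [hres, Scheme.basicOpen_res]
      exact congrArg (U ⊓ ·) (basicOpen_eq_of_affine (R := CommRingCat.of A) g.1)
    intro x hx
    have hx' : ¬ 𝔞 ≤ x.asIdeal := by
      have hxU : x ∈ U.1 := hx
      rw [hU] at hxU
      exact hxU
    obtain ⟨g, hg𝔞, hgx⟩ := SetLike.not_le_iff_exists.mp hx'
    apply TopologicalSpace.Opens.mem_iSup.mpr
    refine ⟨⟨g, hg𝔞⟩, ?_⟩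
    rw [hVeq]
    exact ⟨hx, hgx⟩
  exact aux_geom U p hp.1.1 (φ g₀) htp ht0 hmin
    (fun g : {g : A // g ∈ 𝔞} => φ g.1)
    (fun g => hple (Ideal.mem_map_of_mem φ g.2)) hcover
end

section
/- Let A be an integral domain with fraction field K, let q ∈ K, and let a ∈ A. Define the denominator ideal N(q) = {f ∈ A : q·f ∈ A} and the numerator ideal Z(q) = q·N(q) = {g ∈ A : g = q·f for some f ∈ N(q)} (both are ideals of A, where A is identified with its image in K). Then the radical of N(q) + Z(q) equals the radical of N(q + a) + Z(q + a). -/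
open scoped nonZeroDivisors

/-- The denominator ideal `N(q) = {f ∈ A : q·f ∈ A}` of an element `q` of the fraction
field of a domain `A`. -/
def denomIdeal (A : Type u) [CommRing A] [IsDomain A] (q : FractionRing A) : Ideal A where
  carrier := {f | ∃ g : A,
    algebraMap A (FractionRing A) g = q * algebraMap A (FractionRing A) f}
  zero_mem' := ⟨0, by simp⟩
  add_mem' := by
    rintro x y ⟨gx, hgx⟩ ⟨gy, hgy⟩
    exact ⟨gx + gy, by rw [map_add, map_add, hgx, hgy, mul_add]⟩
  smul_mem' := by
    rintro c x ⟨g, hg⟩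
    refine ⟨c * g, ?_⟩
    rw [smul_eq_mul, map_mul, map_mul, hg]
    ring

/-- The numerator ideal `Z(q) = q·N(q)` of an element `q` of the fraction field of a
domain `A`. -/
def numerIdeal (A : Type u) [CommRing A] [IsDomain A] (q : FractionRing A) : Ideal A where
  carrier := {g | ∃ f : A,
    algebraMap A (FractionRing A) g = q * algebraMap A (FractionRing A) f}
  zero_mem' := ⟨0, by simp⟩
  add_mem' := by
    rintro x y ⟨fx, hfx⟩ ⟨fy, hfy⟩
    exact ⟨fx + fy, by rw [map_add, map_add, hfx, hfy, mul_add]⟩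
  smul_mem' := by
    rintro c g ⟨f, hf⟩
    refine ⟨c * f, ?_⟩
    rw [smul_eq_mul, map_mul, map_mul, hf]
    ring

lemma key_le {A : Type u} [CommRing A] [IsDomain A] (q : FractionRing A) (a : A) :
    denomIdeal A q + numerIdeal A q ≤
      denomIdeal A (q + algebraMap A (FractionRing A) a) +
        numerIdeal A (q + algebraMap A (FractionRing A) a) := by
  intro x hx
  rw [Submodule.add_eq_sup, Submodule.mem_sup] at hx ⊢
  obtain ⟨n, ⟨g, hg⟩, z, ⟨f, hf⟩, rfl⟩ := hx
  have hfmem : f ∈ denomIdeal A (q + algebraMap A (FractionRing A) a) := by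
    refine ⟨z + a * f, ?_⟩
    rw [map_add, map_mul, hf, add_mul]
  refine ⟨n - a * f, ?_, z + a * f, ⟨f, ?_⟩, by ring⟩
  · have h1 : n ∈ denomIdeal A (q + algebraMap A (FractionRing A) a) := by
      refine ⟨g + a * n, ?_⟩
      rw [map_add, map_mul, hg, add_mul]
    have h2 := (denomIdeal A (q + algebraMap A (FractionRing A) a)).smul_mem a hfmem
    exact sub_mem h1 h2
  · rw [map_add, map_mul, hf, add_mul]

/-- The radical of the sum of the denominator and numerator ideals of a rational function
`q` is invariant under adding a global (integral) element `a ∈ A` to `q`. -/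
theorem stmt_16 {A : Type u} [CommRing A] [IsDomain A] (q : FractionRing A) (a : A) :
    (denomIdeal A q + numerIdeal A q).radical =
      (denomIdeal A (q + algebraMap A (FractionRing A) a) +
        numerIdeal A (q + algebraMap A (FractionRing A) a)).radical := by
  have h : denomIdeal A q + numerIdeal A q =
      denomIdeal A (q + algebraMap A (FractionRing A) a) +
        numerIdeal A (q + algebraMap A (FractionRing A) a) := by
    refine le_antisymm (key_le q a) ?_
    have := key_le (q + algebraMap A (FractionRing A) a) (-a)
    simpa using this
  rw [h]
end

section
/- Let X be a scheme that is quasi-compact and quasi-separated and whose underlying topological space has Krull dimension at most 0 (every point is its own closure among specializations, i.e. the space is zero-dimensional in the sense that there are no nontrivial specializations). Then X is an affine scheme. -/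
open AlgebraicGeometry CategoryTheory

universe u

section Aux

open PrimeSpectrum in
/-- In the prime spectrum of a ring with no nontrivial specializations, every basic open is
closed. -/
lemma aux_isClosed_basicOpen {R : Type u} [CommRing R]
    (h : ∀ p q : PrimeSpectrum R, p ⤳ q → p = q) (f : R) :
    IsClosed (basicOpen f : Set (PrimeSpectrum R)) := by
  rw [← isOpen_compl_iff, isOpen_iff_forall_mem_open]
  intro p hp
  have hfp : f ∈ p.asIdeal := by
    by_contra hf
    exact hp hf
  haveI := p.isPrime
  have hmin : p.asIdeal ∈ minimalPrimes R := by
    rw [minimalPrimes_eq_minimals]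
    refine ⟨p.isPrime, ?_⟩
    intro q hq hqle
    have := h ⟨q, hq⟩ p ((PrimeSpectrum.le_iff_specializes _ _).mp hqle)
    exact le_of_eq (congrArg PrimeSpectrum.asIdeal this.symm)
  have hnil : IsNilpotent (algebraMap R (Localization p.asIdeal.primeCompl) f) := by
    rw [show ∀ x : Localization p.asIdeal.primeCompl,
        IsNilpotent x ↔ x ∈ IsLocalRing.maximalIdeal _ from
      fun x => by
        haveI := IsLocalization.subsingleton_primeSpectrum_of_mem_minimalPrimes p.asIdeal hmin
          (Localization p.asIdeal.primeCompl)
        rw [nilpotent_iff_mem_prime]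
        refine ⟨fun hx => hx _ (IsLocalRing.maximalIdeal.isMaximal _).isPrime, fun hx J hJ => ?_⟩
        have := congrArg PrimeSpectrum.asIdeal (Subsingleton.elim (⟨J, hJ⟩ : PrimeSpectrum _)
          ⟨_, (IsLocalRing.maximalIdeal.isMaximal _).isPrime⟩)
        rw [show J = IsLocalRing.maximalIdeal _ from this]
        exact hx]
    exact (IsLocalization.AtPrime.to_map_mem_maximal_iff (Localization p.asIdeal.primeCompl) p.asIdeal f).mpr hfp
  obtain ⟨n, hn⟩ := hnil
  rw [← map_pow] at hn
  obtain ⟨s, hs⟩ := (IsLocalization.map_eq_zero_iff p.asIdeal.primeCompl _ _).mp hn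
  refine ⟨PrimeSpectrum.basicOpen (s : R), ?_, (PrimeSpectrum.basicOpen (s : R)).2, s.2⟩
  intro q hq
  simp only [Set.mem_compl_iff, SetLike.mem_coe, PrimeSpectrum.mem_basicOpen] at hq ⊢
  intro hfq
  have h1 : (s : R) * f ^ n ∉ q.asIdeal := fun hmem =>
    ((q.isPrime.mem_or_mem hmem).elim hq fun hc => hfq (q.isPrime.mem_of_pow_mem _ hc))
  exact h1 (hs ▸ q.asIdeal.zero_mem)

/-- In a quasi-separated scheme with no nontrivial specializations, every quasi-compact open
is closed. -/
lemma aux_isClosed_of_isCompact {X : Scheme.{u}} [QuasiSeparatedSpace X]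
    (h : ∀ x y : X, x ⤳ y → x = y) (U : X.Opens) (hU : IsCompact (U : Set X)) :
    IsClosed (U : Set X) := by
  rw [← isOpen_compl_iff, isOpen_iff_forall_mem_open]
  intro y hy
  obtain ⟨V, hVaff : IsAffineOpen V, hyV, -⟩ :=
    TopologicalSpace.Opens.isBasis_iff_nbhd.mp X.isBasis_affineOpens
      (show y ∈ (⊤ : X.Opens) from trivial)
  set g := hVaff.fromSpec with hg
  have hrange : Set.range g.base = (V : Set X) := hVaff.range_fromSpec
  set t : Set (PrimeSpectrum Γ(X, V)) := g.base ⁻¹' U with ht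
  have htopen : IsOpen t := U.2.preimage g.base.hom.continuous
  have htc : IsCompact t := by
    have h1 : IsCompact ((U : Set X) ∩ Set.range g.base) := by
      rw [hrange]
      exact QuasiSeparatedSpace.inter_isCompact _ _ U.2 hU V.2 hVaff.isCompact
    have h2 : g.base ⁻¹' ((U : Set X) ∩ Set.range g.base) = t := by
      ext x; exact ⟨fun hx => hx.1, fun hx => ⟨hx, x, rfl⟩⟩
    rw [← h2]
    exact g.isOpenEmbedding.isInducing.isCompact_preimage' h1 Set.inter_subset_right
  have hspec : ∀ p q : PrimeSpectrum Γ(X, V), p ⤳ q → p = q := fun p q hpq =>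
    g.isOpenEmbedding.injective (h _ _ (hpq.map g.base.hom.continuous))
  obtain ⟨s, hs⟩ := PrimeSpectrum.isCompact_isOpen_iff.mp ⟨htc, htopen⟩
  have htclosed : IsClosed t := by
    rw [← hs]
    have he : (PrimeSpectrum.zeroLocus (s : Set Γ(X, V)))ᶜ =
        ⋃ f ∈ s, (PrimeSpectrum.basicOpen f : Set (PrimeSpectrum Γ(X, V))) := by
      ext p
      simp [PrimeSpectrum.mem_zeroLocus, Set.subset_def, PrimeSpectrum.basicOpen]
      exact Iff.rfl
    rw [he]
    exact Set.Finite.isClosed_biUnion s.finite_toSet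
      fun f _ => aux_isClosed_basicOpen hspec f
  refine ⟨g.base '' tᶜ, ?_, g.isOpenEmbedding.isOpenMap _ htclosed.isOpen_compl, ?_⟩
  · rintro _ ⟨p, hp, rfl⟩ hmem
    exact hp hmem
  · have : y ∈ Set.range g.base := hrange ▸ hyV
    obtain ⟨p, hp⟩ := this
    exact ⟨p, fun hpt => hy (by rw [← hp]; exact hpt), hp⟩

/-- A clopen subset of an affine open is an affine open. -/
lemma aux_isAffineOpen_of_isClopen {X : Scheme.{u}} {W V : X.Opens} (hW : IsAffineOpen W)
    (hVW : V ≤ W) (hV : IsClopen (V : Set X)) : IsAffineOpen V := by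
  set g := hW.fromSpec with hg
  have hrange : Set.range g.base = (W : Set X) := hW.range_fromSpec
  set s : Set (PrimeSpectrum Γ(X, W)) := g.base ⁻¹' V with hsdef
  have hs : IsClopen s := hV.preimage g.base.hom.continuous
  obtain ⟨e, he, hse⟩ := PrimeSpectrum.exists_idempotent_basicOpen_eq_of_isClopen hs
  have haff : IsAffineOpen (X := Spec Γ(X, W)) (PrimeSpectrum.basicOpen e) :=
    IsAffineOpen.Spec_basicOpen e
  have himg : g ''ᵁ (PrimeSpectrum.basicOpen e) = V := by
    apply TopologicalSpace.Opens.ext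
    show g.base '' (PrimeSpectrum.basicOpen e : Set (PrimeSpectrum Γ(X, W))) = (V : Set X)
    rw [← hse, hsdef]
    exact Set.image_preimage_eq_of_subset (by rw [hrange]; exact hVW)
  rw [← himg]
  exact (Scheme.Hom.isAffineOpen_iff_of_isOpenImmersion g).mpr haff

lemma exists_sigmaι_eq {ι : Type u} (F : ι → Scheme.{u}) (a : (∐ F : Scheme.{u})) :
    ∃ i x, (Limits.Sigma.ι F i).base x = a := by
  obtain ⟨⟨i, x⟩, rfl⟩ := (sigmaMk F).surjective a
  exact ⟨i, x, (sigmaMk_mk F i x).symm⟩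

/-- A scheme with a finite cover by pairwise disjoint affine opens is affine. -/
lemma aux_isAffine_of_cover {X : Scheme.{u}} {ι : Type u} [Finite ι] (V : ι → X.Opens)
    (hV : ∀ i, IsAffineOpen (V i))
    (hdisj : ∀ i j, i ≠ j → Disjoint (V i : Set X) (V j : Set X))
    (hcover : ∀ x : X, ∃ i, x ∈ V i) : IsAffine X := by
  let F : ι → Scheme.{u} := fun i => (V i).toScheme
  haveI : ∀ i, IsAffine (F i) := fun i => hV i
  let φ : (∐ F) ⟶ X := Limits.Sigma.desc (fun i => (V i).ι)
  have hcomp : ∀ i, Limits.Sigma.ι F i ≫ φ = (V i).ι := fun i => Limits.Sigma.ι_desc _ _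
  have hmem : ∀ (i) (x : F i), (V i).ι.base x ∈ (V i : Set X) := by
    intro i x
    rw [← Scheme.Opens.range_ι]
    exact ⟨x, rfl⟩
  have hinj : Function.Injective φ.base := by
    intro a b hab
    obtain ⟨i, x, rfl⟩ := exists_sigmaι_eq F a
    obtain ⟨j, y, rfl⟩ := exists_sigmaι_eq F b
    rw [← Scheme.Hom.comp_apply, ← Scheme.Hom.comp_apply, hcomp, hcomp] at hab
    by_cases hij : i = j
    · subst hij
      rw [(V i).ι.isOpenEmbedding.injective hab]
    · exact absurd (Set.not_disjoint_iff.mpr ⟨_, hmem i x, hab ▸ hmem j y⟩)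
        (not_not.mpr (hdisj i j hij))
  have hopenmap : IsOpenMap φ.base := by
    intro W hW
    have himg : φ.base '' W =
        ⋃ i, ((V i).ι.base '' ((Limits.Sigma.ι F i).base ⁻¹' W)) := by
      ext z
      constructor
      · rintro ⟨w, hw, rfl⟩
        obtain ⟨i, x, rfl⟩ := exists_sigmaι_eq F w
        refine Set.mem_iUnion.2 ⟨i, x, hw, ?_⟩
        rw [← Scheme.Hom.comp_apply, hcomp]
      · rintro hz
        obtain ⟨i, x, hx, rfl⟩ := Set.mem_iUnion.1 hz
        exact ⟨(Limits.Sigma.ι F i).base x, hx, by rw [← Scheme.Hom.comp_apply, hcomp]⟩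
    rw [himg]
    exact isOpen_iUnion fun i => (V i).ι.isOpenEmbedding.isOpenMap _
      (hW.preimage (Limits.Sigma.ι F i).base.hom.continuous)
  have hemb : Topology.IsOpenEmbedding φ.base :=
    Topology.IsOpenEmbedding.of_continuous_injective_isOpenMap φ.base.hom.continuous hinj hopenmap
  haveI hstalk : ∀ p : (∐ F : Scheme.{u}), IsIso (φ.stalkMap p) := by
    intro p
    obtain ⟨i, x, rfl⟩ := exists_sigmaι_eq F p
    have h1 : IsIso ((Limits.Sigma.ι F i ≫ φ).stalkMap x) := by
      rw [Scheme.Hom.stalkMap_congr_hom _ _ (hcomp i)]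
      infer_instance
    rw [Scheme.Hom.stalkMap_comp] at h1
    exact @IsIso.of_isIso_comp_right _ _ _ _ _ (φ.stalkMap ((Limits.Sigma.ι F i).base x))
      ((Limits.Sigma.ι F i).stalkMap x) _ h1
  haveI : IsOpenImmersion φ := IsOpenImmersion.of_isIso_stalkMap φ hemb
  have hsurj : Function.Surjective φ.base := by
    intro x
    obtain ⟨i, hi⟩ := hcover x
    have : x ∈ Set.range (V i).ι.base := by rwa [Scheme.Opens.range_ι]
    obtain ⟨y, hy⟩ := this
    refine ⟨(Limits.Sigma.ι F i).base y, ?_⟩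
    rw [← Scheme.Hom.comp_apply, hcomp]
    exact hy
  haveI : Epi φ.base := (TopCat.epi_iff_surjective _).mpr hsurj
  haveI : IsIso φ := IsOpenImmersion.isIso φ
  exact IsAffine.of_isIso (inv φ)

end Aux

/-- A quasi-compact, quasi-separated scheme whose underlying space is zero-dimensional is
affine. -/
theorem stmt_17 (X : Scheme.{u}) [CompactSpace X] [QuasiSeparatedSpace X]
    (hdim : topologicalKrullDim X ≤ 0) : IsAffine X := by
  -- Step 1: no nontrivial specializations
  have hs : ∀ x y : X, x ⤳ y → x = y := by
    intro x y hxy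
    by_contra hne
    have hyx : ¬ y ⤳ x := fun h' => hne (hxy.antisymm h').eq
    have hlt : (⟨closure {y}, isIrreducible_singleton.closure, isClosed_closure⟩ :
        TopologicalSpace.IrreducibleCloseds X) <
        ⟨closure {x}, isIrreducible_singleton.closure, isClosed_closure⟩ := by
      constructor
      · exact (specializes_iff_closure_subset.mp hxy :)
      · intro hle
        exact hyx (specializes_iff_closure_subset.mpr hle)
    let p : LTSeries (TopologicalSpace.IrreducibleCloseds X) :=
      (RelSeries.singleton _ _).snoc _ hlt
    have h1 : (p.length : WithBot ℕ∞) ≤ topologicalKrullDim X :=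
      Order.LTSeries.length_le_krullDim p
    have h2 : p.length = 1 := rfl
    rw [h2] at h1
    exact absurd (h1.trans hdim) (by norm_num)
  -- Step 2: finite affine cover
  have hbasis := fun x : X => TopologicalSpace.Opens.isBasis_iff_nbhd.mp X.isBasis_affineOpens
    (show x ∈ (⊤ : X.Opens) from trivial)
  choose Vx hVxaff hVxmem _ using hbasis
  obtain ⟨t, ht⟩ := CompactSpace.elim_nhds_subcover (fun x => (Vx x : Set X))
    (fun x => (Vx x).2.mem_nhds (hVxmem x))
  haveI : Fintype t := inferInstance
  obtain ⟨n, ⟨e⟩⟩ : ∃ n, Nonempty ({x // x ∈ t} ≃ Fin n) := ⟨_, ⟨Fintype.equivFin _⟩⟩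
  let U : Fin n → X.Opens := fun i => Vx (e.symm i : {x // x ∈ t})
  have hUaff : ∀ i, IsAffineOpen (U i) := fun i => hVxaff _
  have hUclosed : ∀ i, IsClosed (U i : Set X) := fun i =>
    aux_isClosed_of_isCompact hs _ (hUaff i).isCompact
  -- Step 3: disjointify
  have hclosedUnion : ∀ i : Fin n, IsClosed (⋃ j ∈ Set.Iio i, (U j : Set X)) :=
    fun i => Set.Finite.isClosed_biUnion (Set.toFinite _) fun j _ => hUclosed j
  let V : Fin n → X.Opens := fun i =>
    ⟨(U i : Set X) \ ⋃ j ∈ Set.Iio i, (U j : Set X), (U i).2.sdiff (hclosedUnion i)⟩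
  have hVclopen : ∀ i, IsClopen (V i : Set X) := fun i =>
    ⟨(hUclosed i).sdiff (isOpen_biUnion fun j _ => (U j).2), (U i).2.sdiff (hclosedUnion i)⟩
  have hVle : ∀ i, V i ≤ U i := fun i => Set.diff_subset
  have hVaff : ∀ i, IsAffineOpen (V i) := fun i =>
    aux_isAffineOpen_of_isClopen (hUaff i) (hVle i) (hVclopen i)
  have hVdisj : ∀ i j, i ≠ j → Disjoint (V i : Set X) (V j : Set X) := by
    intro i j hij
    rw [Set.disjoint_left]
    intro x hxi hxj
    rcases lt_or_gt_of_ne hij with hlt | hlt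
    · exact hxj.2 (Set.mem_biUnion hlt hxi.1)
    · exact hxi.2 (Set.mem_biUnion hlt hxj.1)
  have hVcover : ∀ x : X, ∃ i, x ∈ V i := by
    intro x
    have hex : ∃ i, x ∈ U i := by
      have hx : x ∈ ⋃ y ∈ t, (Vx y : Set X) := ht ▸ Set.mem_univ x
      obtain ⟨y, hyt, hy⟩ := Set.mem_iUnion₂.mp hx
      refine ⟨e ⟨y, hyt⟩, ?_⟩
      show x ∈ Vx ((e.symm (e ⟨y, hyt⟩) : {x // x ∈ t}) : X)
      rw [e.symm_apply_apply]
      exact hy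
    classical
    obtain ⟨i, hi, hmin⟩ := Set.exists_min_image {i | x ∈ U i} id (Set.toFinite _) hex
    refine ⟨i, hi, ?_⟩
    intro hmem
    obtain ⟨j, hji, hj⟩ := Set.mem_iUnion₂.mp hmem
    exact absurd (hmin j hj) (not_le.mpr hji)
  refine aux_isAffine_of_cover (fun i : ULift.{u} (Fin n) => V i.down)
    (fun i => hVaff i.down) (fun i j hij => hVdisj i.down j.down ?_) ?_
  · intro h
    exact hij (by cases i; cases j; cases h; rfl)
  · intro x
    obtain ⟨i, hi⟩ := hVcover x
    exact ⟨⟨i⟩, hi⟩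
end

section
/- Let A be a commutative ring and 𝔞 ⊆ A a finitely generated ideal, so that the open subset U = D(𝔞) ⊆ Spec A is quasi-compact. Let B = Γ(U, O_{Spec A}) be its ring of sections and ρ : A → B the restriction map. Then U is affine if and only if the extended ideal 𝔞B generated by ρ(𝔞) is the unit ideal of B. -/
open AlgebraicGeometry CategoryTheory

lemma stmt_18_aux {A : Type u} [CommRing A] (𝔞 : Ideal A)
    (U : (Spec (CommRingCat.of A)).Opens)
    (hU : U.1 = {p : PrimeSpectrum A | ¬ 𝔞 ≤ p.asIdeal})
    (ρ : A →+* Γ(Spec (CommRingCat.of A), U))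
    (hbo : ∀ f : A, (Spec (CommRingCat.of A)).basicOpen (ρ f)
      = U ⊓ PrimeSpectrum.basicOpen f) :
    IsAffineOpen U ↔ 𝔞.map ρ = ⊤ := by
  have hle : ∀ f ∈ 𝔞, (PrimeSpectrum.basicOpen f : (Spec (CommRingCat.of A)).Opens) ≤ U := by
    intro f hf p hp
    show p ∈ U.1
    rw [hU]
    exact fun hcon => hp (hcon hf)
  have hbo' : ∀ f ∈ 𝔞, (Spec (CommRingCat.of A)).basicOpen (ρ f)
      = PrimeSpectrum.basicOpen f := by
    intro f hf
    rw [hbo f]; exact inf_eq_right.mpr (hle f hf)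
  have hmap : 𝔞.map ρ = Ideal.span (ρ '' 𝔞) := rfl
  constructor
  · intro hAff
    rw [hmap, ← hAff.iSup_basicOpen_eq_self_iff (s := ρ '' ↑𝔞)]
    apply le_antisymm
    · exact iSup_le fun ⟨_, g, hg, rfl⟩ => (hbo' g hg) ▸ hle g hg
    · intro p hp
      have hp' : p ∈ U.1 := hp
      rw [hU] at hp'
      simp only [Set.mem_setOf_eq, SetLike.le_def, not_forall] at hp'
      obtain ⟨g, hg, hgp⟩ := hp'
      have : p ∈ (Spec (CommRingCat.of A)).basicOpen (ρ g) := by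
        rw [hbo' g hg]; exact hgp
      exact TopologicalSpace.Opens.mem_iSup.mpr ⟨⟨ρ g, g, hg, rfl⟩, this⟩
  · intro h
    rw [hmap] at h
    apply isAffineOpen_of_isAffineOpen_basicOpen U (ρ '' ↑𝔞) h
    rintro _ ⟨g, hg, rfl⟩
    rw [hbo' g hg]
    exact IsAffineOpen.Spec_basicOpen (R := CommRingCat.of A) g

/-- For a finitely generated ideal `𝔞` of a commutative ring `A`, the (quasi-compact) open
set `U = D(𝔞)` is affine if and only if `𝔞` generates the unit ideal in the ring of
sections `Γ(U, 𝒪)`. -/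
theorem stmt_18 {A : Type u} [CommRing A] (𝔞 : Ideal A) (hfg : 𝔞.FG)
    (U : (Spec (CommRingCat.of A)).Opens)
    (hU : U.1 = {p : PrimeSpectrum A | ¬ 𝔞 ≤ p.asIdeal}) :
    IsAffineOpen U ↔
      𝔞.map (CommRingCat.Hom.hom ((Scheme.ΓSpecIso (CommRingCat.of A)).inv ≫
        (Spec (CommRingCat.of A)).presheaf.map (homOfLE le_top).op) :
          A →+* Γ(Spec (CommRingCat.of A), U)) = ⊤ := by
  apply stmt_18_aux 𝔞 U hU
  intro f
  have : (CommRingCat.Hom.hom ((Scheme.ΓSpecIso (CommRingCat.of A)).inv ≫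
        (Spec (CommRingCat.of A)).presheaf.map (homOfLE le_top).op) :
          A →+* Γ(Spec (CommRingCat.of A), U)) f
      = (Spec (CommRingCat.of A)).presheaf.map (homOfLE (le_top (a := U))).op
        ((Scheme.ΓSpecIso (CommRingCat.of A)).inv f) := rfl
  rw [this, Scheme.basicOpen_res]
  exact congrArg (U ⊓ ·) (basicOpen_eq_of_affine (R := CommRingCat.of A) f)
end

section
/- Let X be a separated scheme and U ⊆ X an open subscheme that is semiaffine, i.e. there exist a commutative ring A and a proper morphism U → Spec A. Then the open immersion U → X is an affine morphism. -/
open AlgebraicGeometry CategoryTheory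

open CategoryTheory.Limits

/-- A semiaffine open subscheme of a separated scheme is affinely embedded: if `U` admits a
proper morphism to an affine scheme, then the open immersion `U ⟶ X` is an affine
morphism. -/
theorem stmt_19 (X : Scheme.{u}) [X.IsSeparated] (U : X.Opens)
    (hsemi : ∃ (A : CommRingCat.{u}) (f : (U : Scheme.{u}) ⟶ Spec A), IsProper f) :
    IsAffineHom U.ι := by
  obtain ⟨A, p, hp⟩ := hsemi
  haveI := hp
  -- The product square
  have sq : IsPullback (prod.fst : X ⨯ Spec A ⟶ X) (prod.snd : X ⨯ Spec A ⟶ Spec A)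
      (terminal.from X) (terminal.from (Spec A)) :=
    IsPullback.of_hasBinaryProduct' X (Spec A)
  -- prod.snd is separated
  haveI hsnd : IsSeparated (prod.snd : X ⨯ Spec A ⟶ Spec A) :=
    MorphismProperty.of_isPullback sq inferInstance
  -- prod.fst is affine
  haveI := isAffineHom_isStableUnderBaseChange
  haveI hfst : IsAffineHom (prod.fst : X ⨯ Spec A ⟶ X) :=
    MorphismProperty.of_isPullback sq.flip inferInstance
  -- the canonical lift
  set l : (U : Scheme.{u}) ⟶ X ⨯ Spec A := prod.lift U.ι p with hldef
  have hl : l ≫ prod.fst = U.ι := prod.lift_fst _ _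
  -- l is a preimmersion
  haveI hcomp : IsPreimmersion (l ≫ (prod.fst : X ⨯ Spec A ⟶ X)) := by
    rw [hl]; infer_instance
  haveI : SurjectiveOnStalks l := SurjectiveOnStalks.of_comp l prod.fst
  haveI hlpre : IsPreimmersion l := by
    refine ⟨?_⟩
    have h := hcomp.base_embedding
    change Topology.IsEmbedding ((prod.fst : X ⨯ Spec A ⟶ X) ∘ l) at h
    exact h.of_comp (Scheme.Hom.continuous l) (Scheme.Hom.continuous (prod.fst : X ⨯ Spec A ⟶ X))
  -- graph factorization through pullback p prod.snd
  have hps : (𝟙 (U : Scheme.{u})) ≫ p = l ≫ prod.snd := by rw [Category.id_comp]; exact (prod.lift_snd _ _).symm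
  set Γ : (U : Scheme.{u}) ⟶ pullback p (prod.snd : X ⨯ Spec A ⟶ Spec A) :=
    pullback.lift (𝟙 _) l hps with hΓdef
  haveI : IsSeparated (pullback.fst p (prod.snd : X ⨯ Spec A ⟶ Spec A)) :=
    inferInstance
  haveI : IsClosedImmersion (Γ ≫ pullback.fst p (prod.snd : X ⨯ Spec A ⟶ Spec A)) := by
    rw [hΓdef, pullback.lift_fst]; infer_instance
  haveI hΓ : IsClosedImmersion Γ := IsClosedImmersion.of_comp Γ (pullback.fst _ _)
  haveI : UniversallyClosed (pullback.snd p (prod.snd : X ⨯ Spec A ⟶ Spec A)) :=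
    inferInstance
  have hGl : Γ ≫ pullback.snd p (prod.snd : X ⨯ Spec A ⟶ Spec A) = l :=
    pullback.lift_snd _ _ _
  haveI : UniversallyClosed l := by rw [← hGl]; infer_instance
  haveI : IsClosedImmersion l :=
    IsClosedImmersion.of_isPreimmersion l (l.isClosedMap.isClosed_range)
  rw [← hl]
  infer_instance
end
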